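/- arXiv:0905.0615 — 5 statements merged into one kernel-verified Lean document; each statement's English description precedes it below -/
import Mathlib

section
/- There exists a continuous critical sub-solution u : X → ℝ such that every bi-infinite sequence calibrated for u is calibrated for every critical sub-solution; in particular Â_u = Â and A_u = A, and consequently the projected Aubry set A equals the image of Â under projection onto the first coordinate. -/
open Metric Set Filter Topology

/-- `X` is a `B`-length space at scale `K`. -/
def IsBLengthSpaceAtScale (X : Type*) [MetricSpace X] (B K : ℝ) : Prop :=
  ∀ x y : X, ∃ (n : ℕ) (p : ℕ → X), p 0 = x ∧ p n = y ∧
    (∀ i < n, dist (p i) (p (i + 1)) ≤ K) ∧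
    ∑ i ∈ Finset.range n, dist (p i) (p (i + 1)) ≤ B * dist x y

/-- Uniform superlinearity of the cost `c`. -/
def UniformlySuperlinear {X : Type*} [MetricSpace X] (c : X → X → ℝ) : Prop :=
  ∀ k : ℝ, 0 ≤ k → ∃ C : ℝ, ∀ x y : X, k * dist x y - C ≤ c x y

/-- Uniform boundedness of the cost `c`. -/
def UniformlyBounded {X : Type*} [MetricSpace X] (c : X → X → ℝ) : Prop :=
  ∀ R : ℝ, ∃ A : ℝ, ∀ x y : X, dist x y ≤ R → c x y ≤ A

/-- `u` is `α`-dominated: `u y - u x ≤ c x y + α` for all `x y`. -/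
def Dominated {X : Type*} (c : X → X → ℝ) (α : ℝ) (u : X → ℝ) : Prop :=
  ∀ x y : X, u y - u x ≤ c x y + α

/-- Negative Lax-Oleinik semigroup. -/
noncomputable def Tm {X : Type*} (c : X → X → ℝ) (u : X → ℝ) (x : X) : ℝ :=
  ⨅ y, (u y + c y x)

/-- Positive Lax-Oleinik semigroup. -/
noncomputable def Tp {X : Type*} (c : X → X → ℝ) (u : X → ℝ) (x : X) : ℝ :=
  ⨆ y, (u y - c x y)

/-- The critical constant `α[0]`: the smallest `α` for which `α`-dominated functions exist. -/
noncomputable def critValue {X : Type*} (c : X → X → ℝ) : ℝ :=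
  sInf {α : ℝ | ∃ u : X → ℝ, Dominated c α u}

/-- The Mañé potential `φ(x,y) = sup_u (u y - u x)`, sup over critical sub-solutions. -/
noncomputable def mane {X : Type*} (c : X → X → ℝ) (x y : X) : ℝ :=
  sSup {r : ℝ | ∃ u : X → ℝ, Dominated c (critValue c) u ∧ r = u y - u x}

/-- A bi-infinite sequence is `(u,c,α)`-calibrated if all its finite subchains of
consecutive terms are calibrated. -/
def IsCalibrated {X : Type*} (c : X → X → ℝ) (α : ℝ) (u : X → ℝ) (x : ℤ → X) : Prop :=
  ∀ (m : ℤ) (k : ℕ), u (x (m + k)) =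
    u (x m) + (∑ i ∈ Finset.range k, c (x (m + i)) (x (m + i + 1))) + k * α

/-- The projected Aubry set of a critical sub-solution `u`. -/
def projAubry {X : Type*} (c : X → X → ℝ) (u : X → ℝ) : Set X :=
  {p : X | ∃ x : ℤ → X, IsCalibrated c (critValue c) u x ∧ x 0 = p}

/-- The set `Â_u` of pairs of consecutive terms of calibrated bi-infinite sequences. -/
def aubryPairs {X : Type*} (c : X → X → ℝ) (u : X → ℝ) : Set (X × X) :=
  {q : X × X | ∃ (x : ℤ → X) (n : ℤ),
    IsCalibrated c (critValue c) u x ∧ x n = q.1 ∧ x (n + 1) = q.2}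

/-- The projected Aubry set `A = ∩_u A_u`, intersection over all critical sub-solutions. -/
def projAubrySet {X : Type*} (c : X → X → ℝ) : Set X :=
  {p : X | ∀ u : X → ℝ, Dominated c (critValue c) u → p ∈ projAubry c u}

/-- The Aubry pair set `Â = ∩_u Â_u`, intersection over all critical sub-solutions. -/
def aubryPairsSet {X : Type*} (c : X → X → ℝ) : Set (X × X) :=
  {q : X × X | ∀ u : X → ℝ, Dominated c (critValue c) u → q ∈ aubryPairs c u}

/-- `c_n(x,y)`: infimum of total cost over chains of length `n` from `x` to `y`. -/
noncomputable def cChain {X : Type*} (c : X → X → ℝ) (n : ℕ) (x y : X) : ℝ :=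
  sInf {r : ℝ | ∃ p : ℕ → X, p 0 = x ∧ p n = y ∧
    r = ∑ i ∈ Finset.range n, c (p i) (p (i + 1))}

/-- `φ_n(x,y) = inf_{k ≥ n} (c_k(x,y) + k·α)`. -/
noncomputable def phiN {X : Type*} (c : X → X → ℝ) (α : ℝ) (n : ℕ) (x y : X) : ℝ :=
  sInf {r : ℝ | ∃ k : ℕ, n ≤ k ∧ r = cChain c k x y + k * α}

/-- The Peierls barrier, with values in the extended reals. -/
noncomputable def peierls {X : Type*} (c : X → X → ℝ) (α : ℝ) (x y : X) : EReal :=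
  Filter.liminf (fun n : ℕ => ((cChain c n x y + n * α : ℝ) : EReal)) Filter.atTop

/-- Negative Lax-Oleinik semigroup on extended-real-valued functions. -/
noncomputable def eTm {X : Type*} (c : X → X → ℝ) (u : X → EReal) (x : X) : EReal :=
  ⨅ y, (u y + (c y x : EReal))

/-- Positive Lax-Oleinik semigroup on extended-real-valued functions. -/
noncomputable def eTp {X : Type*} (c : X → X → ℝ) (u : X → EReal) (x : X) : EReal :=
  ⨆ y, (u y - (c x y : EReal))


section AuxWK

set_option linter.unusedSectionVars false

variable {X : Type*} [MetricSpace X] [Nonempty X] {c : X → X → ℝ}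

lemma aux_Tm_bdd {α : ℝ} {v : X → ℝ} (hv : Dominated c α v) (x : X) :
    BddBelow (Set.range fun z => v z + c z x) := by
  refine ⟨v x - α, ?_⟩
  rintro _ ⟨z, rfl⟩
  have := hv z x
  show v x - α ≤ v z + c z x
  linarith

lemma aux_Tm_le {α : ℝ} {v : X → ℝ} (hv : Dominated c α v) (x z : X) :
    Tm c v x ≤ v z + c z x :=
  ciInf_le (aux_Tm_bdd hv x) z

lemma aux_le_Tm {α : ℝ} {v : X → ℝ} (hv : Dominated c α v) (x : X) :
    v x - α ≤ Tm c v x :=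
  le_ciInf fun z => by have := hv z x; linarith

lemma aux_Tm_dominated {α : ℝ} {v : X → ℝ} (hv : Dominated c α v) :
    Dominated c α (Tm c v) := by
  intro x y
  have h1 := aux_Tm_le hv y x
  have h2 := aux_le_Tm hv x
  linarith

lemma aux_Tm_tight {α : ℝ} {v : X → ℝ} (hv : Dominated c α v) {a b : X}
    (h : Tm c v b - Tm c v a = c a b + α) :
    Tm c v a = v a - α ∧ Tm c v b = v a + c a b := by
  have h1 := aux_Tm_le hv b a
  have h2 := aux_le_Tm hv a
  constructor <;> linarith

lemma aux_pairwise {α : ℝ} {v : X → ℝ} {x : ℤ → X} (h : IsCalibrated c α v x) (m : ℤ) :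
    v (x (m + 1)) - v (x m) = c (x m) (x (m + 1)) + α := by
  have h1 := h m 1
  simp [Finset.sum_range_one] at h1
  linarith

lemma aux_calibrated_of_pairwise {α : ℝ} {v : X → ℝ} {x : ℤ → X}
    (h : ∀ m : ℤ, v (x (m + 1)) - v (x m) = c (x m) (x (m + 1)) + α) :
    IsCalibrated c α v x := by
  intro m k
  induction k with
  | zero => simp
  | succ k ih =>
    have h1 := h (m + (k : ℤ))
    have e1 : m + ((k : ℤ) + 1) = m + (k : ℤ) + 1 := by ring
    rw [Finset.sum_range_succ]
    push_cast
    rw [e1]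
    push_cast at ih
    linarith

lemma aux_calibrated_shift {α : ℝ} {v : X → ℝ} {x : ℤ → X}
    (h : IsCalibrated c α v x) (n : ℤ) :
    IsCalibrated c α v (fun i => x (n + i)) := by
  intro m k
  simpa [add_assoc] using h (n + m) k

lemma aux_chain_bound {u : X → ℝ} {E Kc : ℝ} (hK : 0 < Kc) (hE : 0 ≤ E)
    (hstep : ∀ a b : X, dist a b ≤ Kc → u b - u a ≤ E) :
    ∀ n : ℕ, ∀ p : ℕ → X, (∀ i, i < n → dist (p i) (p (i + 1)) ≤ Kc) →
      Kc * (u (p n) - u (p 0)) ≤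
        E * (Kc + 2 * ∑ i ∈ Finset.range n, dist (p i) (p (i + 1))) := by
  intro n
  induction n using Nat.strong_induction_on with
  | _ n ih =>
    intro p hp
    set s := ∑ i ∈ Finset.range n, dist (p i) (p (i + 1)) with hs
    have hs0 : 0 ≤ s := Finset.sum_nonneg fun i _ => dist_nonneg
    by_cases hsK : s ≤ Kc
    · have hd : dist (p 0) (p n) ≤ s := dist_le_range_sum_dist p n
      have h1 := hstep (p 0) (p n) (hd.trans hsK)
      nlinarith [mul_le_mul_of_nonneg_left h1 hK.le, mul_nonneg hE hs0]
    · push_neg at hsK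
      have hex : ∃ m, Kc ≤ ∑ i ∈ Finset.range m, dist (p i) (p (i + 1)) := ⟨n, hsK.le⟩
      set m := Nat.find hex with hmdef
      have hmKc : Kc ≤ ∑ i ∈ Finset.range m, dist (p i) (p (i + 1)) := Nat.find_spec hex
      have hmn : m ≤ n := Nat.find_min' hex hsK.le
      have hm1 : 1 ≤ m := by
        by_contra h0
        have hm0 : m = 0 := by omega
        rw [hm0] at hmKc
        simp at hmKc
        linarith
      have hprev : ∑ i ∈ Finset.range (m - 1), dist (p i) (p (i + 1)) < Kc := by
        have h := Nat.find_min hex (show m - 1 < m by omega)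
        linarith [not_le.1 h]
      have hjump : dist (p 0) (p (m - 1)) ≤ Kc :=
        le_trans (dist_le_range_sum_dist p (m - 1)) hprev.le
      have hA1 : u (p (m - 1)) - u (p 0) ≤ E := hstep _ _ hjump
      have hstepm : dist (p (m - 1)) (p m) ≤ Kc := by
        have h' := hp (m - 1) (by omega)
        have e : m - 1 + 1 = m := by omega
        rwa [e] at h'
      have hA2 : u (p m) - u (p (m - 1)) ≤ E := hstep _ _ hstepm
      have hmn' : m + (n - m) = n := by omega
      have htail : Kc * (u (p (m + (n - m))) - u (p (m + 0))) ≤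
          E * (Kc + 2 * ∑ i ∈ Finset.range (n - m), dist (p (m + i)) (p (m + i + 1))) :=
        ih (n - m) (by omega) (fun i => p (m + i))
          (fun i hi => hp (m + i) (by omega))
      rw [hmn', Nat.add_zero] at htail
      have hsplit : s = (∑ i ∈ Finset.range m, dist (p i) (p (i + 1)))
          + ∑ i ∈ Finset.range (n - m), dist (p (m + i)) (p (m + i + 1)) := by
        rw [hs, ← Finset.sum_range_add_sum_Ico _ hmn, Finset.sum_Ico_eq_sum_range]
      have hs2 : ∑ i ∈ Finset.range (n - m), dist (p (m + i)) (p (m + i + 1)) ≤ s - Kc := by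
        linarith
      nlinarith [mul_le_mul_of_nonneg_left hA1 hK.le, mul_le_mul_of_nonneg_left hA2 hK.le,
        mul_le_mul_of_nonneg_left hs2 hE]

lemma aux_coarse {B Kc E : ℝ} (hK : 0 < Kc) (hE : 0 ≤ E)
    (hlen : IsBLengthSpaceAtScale X B Kc) {u : X → ℝ}
    (hstep : ∀ a b : X, dist a b ≤ Kc → u b - u a ≤ E) (x y : X) :
    u y - u x ≤ E + 2 * B * E / Kc * dist x y := by
  obtain ⟨n, p, hp0, hpn, hgap, hsum⟩ := hlen x y
  have h := aux_chain_bound hK hE hstep n p (fun i hi => hgap i hi)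
  rw [hp0, hpn] at h
  have h2 : Kc * (u y - u x) ≤ E * (Kc + 2 * (B * dist x y)) := by
    have hsum' : ∑ i ∈ Finset.range n, dist (p i) (p (i + 1)) ≤ B * dist x y := hsum
    nlinarith [mul_le_mul_of_nonneg_left hsum' hE]
  have h3 : u y - u x ≤ E * (Kc + 2 * (B * dist x y)) / Kc := by
    rw [le_div_iff₀ hK]
    nlinarith
  have h4 : E * (Kc + 2 * (B * dist x y)) / Kc = E + 2 * B * E / Kc * dist x y := by
    field_simp
  linarith

lemma aux_exists_dominated {α M L : ℝ} {x0 : X} (U : ℕ → X → ℝ)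
    (hU : ∀ n : ℕ, Dominated c (α + 1 / ((n : ℝ) + 1)) (U n))
    (hbd : ∀ (n : ℕ) (x : X), |U n x - U n x0| ≤ M + L * dist x x0) :
    ∃ v : X → ℝ, Dominated c α v := by
  classical
  let F : Ultrafilter ℕ := Ultrafilter.of atTop
  have hF : (F : Filter ℕ) ≤ atTop := Ultrafilter.of_le atTop
  have hlim : ∀ x : X, ∃ r : ℝ, Filter.Tendsto (fun n => U n x - U n x0) F (𝓝 r) := by
    intro x
    set s : Set ℝ := Set.Icc (-(M + L * dist x x0)) (M + L * dist x x0) with hsdef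
    have hc : IsCompact s := isCompact_Icc
    have hmem : ∀ n : ℕ, (U n x - U n x0) ∈ s := by
      intro n
      have h := abs_le.1 (hbd n x)
      exact ⟨by linarith [h.1], h.2⟩
    obtain ⟨r, _, hle⟩ := hc.ultrafilter_le_nhds (F.map fun n => U n x - U n x0) (by
      rw [Ultrafilter.coe_map]
      refine Filter.le_principal_iff.2 (Filter.mem_map.2 ?_)
      have huniv : {n : ℕ | U n x - U n x0 ∈ s} = Set.univ := by
        ext n; simp [hmem n]
      rw [show (fun n => U n x - U n x0) ⁻¹' s = {n : ℕ | U n x - U n x0 ∈ s} from rfl, huniv]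
      exact Filter.univ_mem)
    refine ⟨r, ?_⟩
    rwa [Filter.Tendsto, ← Ultrafilter.coe_map]
  choose v hv using hlim
  refine ⟨v, ?_⟩
  intro x y
  have h1 : Filter.Tendsto (fun n => U n y - U n x0) F (𝓝 (v y)) := hv y
  have h0 : Filter.Tendsto (fun n : ℕ => (1 : ℝ) / ((n : ℝ) + 1)) F (𝓝 0) :=
    tendsto_one_div_add_atTop_nhds_zero_nat.mono_left hF
  have h2 : Filter.Tendsto (fun n : ℕ => (U n x - U n x0) + (c x y + α + 1 / ((n : ℝ) + 1)))
      F (𝓝 (v x + (c x y + α + 0))) :=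
    (hv x).add (h0.const_add (c x y + α))
  have hle : ∀ n : ℕ, U n y - U n x0 ≤ (U n x - U n x0) + (c x y + α + 1 / ((n : ℝ) + 1)) := by
    intro n
    have := hU n x y
    linarith
  have := le_of_tendsto_of_tendsto' h1 h2 hle
  linarith

lemma aux_Tm_equicont [ProperSpace X] {α M L C A : ℝ}
    (hcont : Continuous fun q : X × X => c q.1 q.2)
    (hAc : ∀ x : X, c x x ≤ A)
    (hCc : ∀ x y : X, (L + 1) * dist x y - C ≤ c x y)
    (hcoarse : ∀ v : X → ℝ, Dominated c α v → ∀ x y : X, v y - v x ≤ M + L * dist x y)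
    (x₀ : X) {ε : ℝ} (hε : 0 < ε) :
    ∃ δ > 0, ∀ v : X → ℝ, Dominated c α v → ∀ x : X, dist x x₀ < δ →
      |Tm c v x - Tm c v x₀| < ε := by
  classical
  set ρ := |M| + |C| + |A| + 1 with hρdef
  have hρ0 : 0 < ρ := by positivity
  have hfar : ∀ v : X → ℝ, Dominated c α v → ∀ x z : X, ρ ≤ dist z x →
      Tm c v x + 1 ≤ v z + c z x := by
    intro v hv x z hz
    have h1 : v x - v z ≤ M + L * dist z x := hcoarse v hv z x
    have h2 : (L + 1) * dist z x - C ≤ c z x := hCc z x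
    have h3 : Tm c v x ≤ v x + c x x := aux_Tm_le hv x x
    have h4 : c x x ≤ A := hAc x
    have h5 : (L + 1) * dist z x = L * dist z x + dist z x := by ring
    have h6 := le_abs_self M
    have h7 := le_abs_self C
    have h8 := le_abs_self A
    linarith
  set S1 := closedBall x₀ (ρ + 1) with hS1
  set S2 := closedBall x₀ 1 with hS2
  have hcomp : IsCompact (S1 ×ˢ S2) :=
    (isCompact_closedBall x₀ (ρ + 1)).prod (isCompact_closedBall x₀ 1)
  have hu : UniformContinuousOn (fun q : X × X => c q.1 q.2) (S1 ×ˢ S2) :=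
    hcomp.uniformContinuousOn_of_continuous hcont.continuousOn
  rw [Metric.uniformContinuousOn_iff] at hu
  set ε' : ℝ := min (ε / 3) (1 / 2) with hε'def
  have hε'0 : 0 < ε' := by
    apply lt_min (by linarith) (by norm_num)
  have hε'h : ε' ≤ 1 / 2 := min_le_right _ _
  have hε'e : ε' ≤ ε / 3 := min_le_left _ _
  obtain ⟨δ₀, hδ₀, hδ⟩ := hu ε' hε'0
  refine ⟨min δ₀ 1, lt_min hδ₀ one_pos, ?_⟩
  intro v hv x hx
  have hx1 : dist x x₀ ≤ 1 := le_of_lt (lt_of_lt_of_le hx (min_le_right _ _))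
  have hxδ : dist x x₀ < δ₀ := lt_of_lt_of_le hx (min_le_left _ _)
  have hxS2 : x ∈ S2 := by rw [hS2, mem_closedBall]; exact hx1
  have hx₀S2 : x₀ ∈ S2 := by rw [hS2, mem_closedBall, dist_self]; norm_num
  have h0 : Tm c v x₀ < Tm c v x₀ + ε' := by linarith
  obtain ⟨z, hz⟩ := exists_lt_of_ciInf_lt h0
  have hz1 : dist z x₀ < ρ := by
    by_contra hcon
    have := hfar v hv x₀ z (not_lt.1 hcon)
    linarith
  have hzS1 : z ∈ S1 := by rw [hS1, mem_closedBall]; linarith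
  have hcc : |c z x - c z x₀| < ε' := by
    have hd : dist ((z, x) : X × X) (z, x₀) < δ₀ := by
      rw [Prod.dist_eq]
      simp only [dist_self]
      exact max_lt hδ₀ hxδ
    have := hδ (z, x) (Set.mk_mem_prod hzS1 hxS2) (z, x₀) (Set.mk_mem_prod hzS1 hx₀S2) hd
    rwa [Real.dist_eq] at this
  have hup : Tm c v x ≤ Tm c v x₀ + 2 * ε' := by
    have h1 := aux_Tm_le hv x z
    have h2 := abs_lt.1 hcc
    linarith
  have h0' : Tm c v x < Tm c v x + ε' := by linarith
  obtain ⟨z', hz'⟩ := exists_lt_of_ciInf_lt h0'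
  have hz'1 : dist z' x < ρ := by
    by_contra hcon
    have := hfar v hv x z' (not_lt.1 hcon)
    linarith
  have hz'S1 : z' ∈ S1 := by
    rw [hS1, mem_closedBall]
    have := dist_triangle z' x x₀
    linarith
  have hcc' : |c z' x₀ - c z' x| < ε' := by
    have hd : dist ((z', x₀) : X × X) (z', x) < δ₀ := by
      rw [Prod.dist_eq]
      simp only [dist_self]
      rw [dist_comm]
      exact max_lt hδ₀ hxδ
    have := hδ (z', x₀) (Set.mk_mem_prod hz'S1 hx₀S2) (z', x) (Set.mk_mem_prod hz'S1 hxS2) hd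
    rwa [Real.dist_eq] at this
  have hdown : Tm c v x₀ ≤ Tm c v x + 2 * ε' := by
    have h1 := aux_Tm_le hv x₀ z'
    have h2 := abs_lt.1 hcc'
    linarith
  have habs : |Tm c v x - Tm c v x₀| ≤ 2 * ε' := abs_le.2 ⟨by linarith, by linarith⟩
  linarith

lemma aux_geom_sum : (∑' n : ℕ, ((1 : ℝ) / 2) ^ (n + 1)) = 1 := by
  have h : ∑' n : ℕ, ((1 : ℝ) / 2) ^ (n + 1) = (∑' n : ℕ, ((1 : ℝ) / 2) ^ n) * (1 / 2) := by
    rw [← tsum_mul_right]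
    exact tsum_congr fun n => pow_succ _ _
  rw [h, tsum_geometric_two]
  norm_num

lemma aux_geom_summable : Summable (fun n : ℕ => ((1 : ℝ) / 2) ^ (n + 1)) := by
  have := summable_geometric_two.mul_right (1 / 2 : ℝ)
  simpa [pow_succ] using this

lemma aux_combo {α M L : ℝ} {x0 : X} {G : ℕ → X → ℝ}
    (hGdom : ∀ n, Dominated c α (G n))
    (hGb : ∀ (n : ℕ) (x : X), |G n x| ≤ M + L * dist x x0) :
    Dominated c α (fun x => ∑' n : ℕ, ((1 : ℝ) / 2) ^ (n + 1) * G n x) ∧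
    (∀ a b : X, (∑' n : ℕ, ((1 : ℝ) / 2) ^ (n + 1) * G n b)
        - (∑' n : ℕ, ((1 : ℝ) / 2) ^ (n + 1) * G n a) = c a b + α →
      ∀ n : ℕ, G n b - G n a = c a b + α) := by
  have hwt : ∀ n : ℕ, (0 : ℝ) < ((1 : ℝ) / 2) ^ (n + 1) := fun n => by positivity
  have hsum : ∀ x : X, Summable (fun n : ℕ => ((1 : ℝ) / 2) ^ (n + 1) * G n x) := by
    intro x
    apply Summable.of_abs
    have hle : ∀ n : ℕ, |((1 : ℝ) / 2) ^ (n + 1) * G n x|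
        ≤ ((1 : ℝ) / 2) ^ (n + 1) * (M + L * dist x x0) := by
      intro n
      rw [abs_mul, abs_of_pos (hwt n)]
      exact mul_le_mul_of_nonneg_left (hGb n x) (hwt n).le
    exact Summable.of_nonneg_of_le (fun n => abs_nonneg _) hle (aux_geom_summable.mul_right _)
  have hsub : ∀ a b : X, (∑' n : ℕ, ((1 : ℝ) / 2) ^ (n + 1) * G n b)
      - (∑' n : ℕ, ((1 : ℝ) / 2) ^ (n + 1) * G n a)
      = ∑' n : ℕ, ((1 : ℝ) / 2) ^ (n + 1) * (G n b - G n a) := by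
    intro a b
    rw [← Summable.tsum_sub (hsum b) (hsum a)]
    congr 1
    funext n
    ring
  have hSc : ∀ r : ℝ, Summable (fun n : ℕ => ((1 : ℝ) / 2) ^ (n + 1) * r) :=
    fun r => aux_geom_summable.mul_right r
  have hSd : ∀ a b : X, Summable (fun n : ℕ => ((1 : ℝ) / 2) ^ (n + 1) * (G n b - G n a)) := by
    intro a b
    have := (hsum b).sub (hsum a)
    apply this.congr
    intro n
    ring
  have htc : ∀ r : ℝ, (∑' n : ℕ, ((1 : ℝ) / 2) ^ (n + 1) * r) = r := by
    intro r
    rw [tsum_mul_right, aux_geom_sum, one_mul]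
  constructor
  · intro a b
    dsimp only
    rw [hsub a b]
    have hle : ∀ n : ℕ, ((1 : ℝ) / 2) ^ (n + 1) * (G n b - G n a)
        ≤ ((1 : ℝ) / 2) ^ (n + 1) * (c a b + α) := fun n =>
      mul_le_mul_of_nonneg_left (hGdom n a b) (hwt n).le
    calc (∑' n : ℕ, ((1 : ℝ) / 2) ^ (n + 1) * (G n b - G n a))
        ≤ ∑' n : ℕ, ((1 : ℝ) / 2) ^ (n + 1) * (c a b + α) :=
          Summable.tsum_le_tsum hle (hSd a b) (hSc _)
      _ = c a b + α := htc _
  · intro a b hab n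
    set f : ℕ → ℝ := fun m => ((1 : ℝ) / 2) ^ (m + 1) * ((c a b + α) - (G m b - G m a)) with hfdef
    have hf0 : ∀ m, 0 ≤ f m := fun m =>
      mul_nonneg (hwt m).le (by have := hGdom m a b; linarith)
    have hfs : Summable f := by
      have := (hSc (c a b + α)).sub (hSd a b)
      apply this.congr
      intro m
      simp only [hfdef]
      ring
    have hft : ∑' m, f m = 0 := by
      have he : ∀ m : ℕ, f m = ((1 : ℝ) / 2) ^ (m + 1) * (c a b + α)
          - ((1 : ℝ) / 2) ^ (m + 1) * (G m b - G m a) := by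
        intro m
        simp only [hfdef]
        ring
      rw [tsum_congr he, Summable.tsum_sub (hSc _) (hSd a b), htc, ← hsub a b, hab]
      ring
    have hn : f n ≤ 0 := by
      rw [← hft]
      exact Summable.le_tsum hfs n (fun m _ => hf0 m)
    have hz : f n = 0 := le_antisymm hn (hf0 n)
    have hne : ((1 : ℝ) / 2) ^ (n + 1) ≠ 0 := (hwt n).ne'
    rcases mul_eq_zero.1 hz with h | h
    · exact absurd h hne
    · linarith

end AuxWK

theorem exists_subsolution_with_minimal_aubry_set {X : Type*} [MetricSpace X] [Nonempty X] [ProperSpace X]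
    {B K : ℝ} (hB : 1 ≤ B) (hK : 0 < K) (hlen : IsBLengthSpaceAtScale X B K)
    {c : X → X → ℝ} (hcont : Continuous fun q : X × X => c q.1 q.2)
    (hsl : UniformlySuperlinear c) (hub : UniformlyBounded c) :
    ∃ u : X → ℝ, Continuous u ∧ Dominated c (critValue c) u ∧
      (∀ x : ℤ → X, IsCalibrated c (critValue c) u x →
        ∀ v : X → ℝ, Dominated c (critValue c) v → IsCalibrated c (critValue c) v x) ∧
      aubryPairs c u = aubryPairsSet c ∧
      projAubry c u = projAubrySet c ∧
      projAubrySet c = Prod.fst '' aubryPairsSet c := by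
  classical
  obtain ⟨A, hA⟩ := hub K
  have hA0 : ∀ x : X, c x x ≤ A := fun x => hA x x (by simp [hK.le])
  set α := critValue c with hαdef
  obtain ⟨C0, hC0⟩ := hsl 0 le_rfl
  have hSne : {β : ℝ | ∃ u : X → ℝ, Dominated c β u}.Nonempty := by
    refine ⟨C0, fun _ => 0, fun x y => ?_⟩
    have := hC0 x y
    simp only [zero_mul, zero_sub] at this
    linarith
  have x0 : X := Classical.arbitrary X
  have hSlb : ∀ β ∈ {β : ℝ | ∃ u : X → ℝ, Dominated c β u}, -A ≤ β := by
    rintro β ⟨u', hu'⟩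
    have h1 := hu' x0 x0
    have h2 := hA0 x0
    linarith
  have hαlb : -A ≤ α := le_csInf hSne hSlb
  have hcrit : ∀ β : ℝ, α < β → ∃ u' : X → ℝ, Dominated c β u' := by
    intro β hβ
    obtain ⟨γ, hγ, hγβ⟩ := exists_lt_of_csInf_lt hSne hβ
    obtain ⟨u', hu'⟩ := hγ
    exact ⟨u', fun x y => le_trans (hu' x y) (by linarith)⟩
  set E : ℝ := A + α + 1 with hEdef
  have hE0 : 0 < E := by rw [hEdef]; linarith
  set L : ℝ := 2 * B * E / K with hLdef
  have hL0 : 0 ≤ L := by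
    rw [hLdef]
    apply div_nonneg _ hK.le
    nlinarith
  have hcoarse : ∀ β : ℝ, β ≤ α + 1 → ∀ u' : X → ℝ, Dominated c β u' →
      ∀ x y : X, u' y - u' x ≤ E + L * dist x y := by
    intro β hβ u' hu' x y
    have hstep : ∀ a b : X, dist a b ≤ K → u' b - u' a ≤ E := by
      intro a b hab
      have h1 := hu' a b
      have h2 := hA a b hab
      rw [hEdef]
      linarith
    have h := aux_coarse hK hE0.le hlen hstep x y
    rw [hLdef]
    linarith
  have hUex : ∀ n : ℕ, ∃ u' : X → ℝ, Dominated c (α + 1 / ((n : ℝ) + 1)) u' := by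
    intro n
    apply hcrit
    have h1 : (0 : ℝ) < 1 / ((n : ℝ) + 1) := by positivity
    linarith
  choose U hUd using hUex
  have hUb : ∀ (n : ℕ) (x : X), |U n x - U n x0| ≤ E + L * dist x x0 := by
    intro n x
    have hβ : α + 1 / ((n : ℝ) + 1) ≤ α + 1 := by
      have h1 : 1 / ((n : ℝ) + 1) ≤ 1 := by
        rw [div_le_one (by positivity)]
        have := Nat.cast_nonneg (α := ℝ) n
        linarith
      linarith
    have h1 := hcoarse _ hβ _ (hUd n) x0 x
    have h2 := hcoarse _ hβ _ (hUd n) x x0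
    rw [dist_comm x0 x] at h1
    rw [abs_sub_le_iff]
    exact ⟨h1, h2⟩
  obtain ⟨u0, hu0⟩ := aux_exists_dominated U hUd hUb
  have hdomE : ∀ v : X → ℝ, Dominated c α v → ∀ x y : X, v y - v x ≤ E + L * dist x y :=
    fun v hv => hcoarse α (by linarith) v hv
  obtain ⟨C, hC⟩ := hsl (L + 1) (by linarith)
  have hEqc : ∀ (x₁ : X) {ε : ℝ}, 0 < ε → ∃ δ > 0, ∀ v : X → ℝ, Dominated c α v →
      ∀ x : X, dist x x₁ < δ → |Tm c v x - Tm c v x₁| < ε :=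
    fun x₁ {ε} hε => aux_Tm_equicont hcont hA0 hC hdomE x₁ hε
  set dseq : ℕ → X := TopologicalSpace.denseSeq X with hdseqdef
  have hdseq : DenseRange dseq := TopologicalSpace.denseRange_denseSeq X
  have hVex : ∀ z : ℕ × ℕ × ℚ, ∃ vn : X → ℝ, Dominated c α vn ∧
      (∀ v' : X → ℝ, Dominated c α v' →
        Tm c v' (dseq z.2.1) - Tm c v' (dseq z.1) < c (dseq z.1) (dseq z.2.1) + α - (z.2.2 : ℝ) →
        Tm c vn (dseq z.2.1) - Tm c vn (dseq z.1) < c (dseq z.1) (dseq z.2.1) + α - (z.2.2 : ℝ)) := by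
    intro z
    by_cases h : ∃ v' : X → ℝ, Dominated c α v' ∧
        Tm c v' (dseq z.2.1) - Tm c v' (dseq z.1) < c (dseq z.1) (dseq z.2.1) + α - (z.2.2 : ℝ)
    · obtain ⟨v', h1, h2⟩ := h
      exact ⟨v', h1, fun _ _ _ => h2⟩
    · exact ⟨u0, hu0, fun v' hv' hlt => absurd ⟨v', hv', hlt⟩ h⟩
  choose V0 hV0dom hV0good using hVex
  set enc : ℕ × ℕ × ℚ ≃ ℕ := Denumerable.eqv (ℕ × ℕ × ℚ) with hencdef
  set G : ℕ → X → ℝ := fun n x => Tm c (V0 (enc.symm n)) x - Tm c (V0 (enc.symm n)) x0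
    with hGdef
  have hGdom : ∀ n : ℕ, Dominated c α (G n) := by
    intro n x y
    have h := aux_Tm_dominated (hV0dom (enc.symm n)) x y
    rw [hGdef]
    dsimp only
    linarith
  have hGb : ∀ (n : ℕ) (x : X), |G n x| ≤ E + L * dist x x0 := by
    intro n x
    have hTd := aux_Tm_dominated (hV0dom (enc.symm n))
    have h1 := hdomE _ hTd x0 x
    have h2 := hdomE _ hTd x x0
    rw [dist_comm x0 x] at h1
    rw [hGdef]
    dsimp only
    rw [abs_sub_le_iff]
    exact ⟨h1, h2⟩
  obtain ⟨hwdom, hcombo⟩ := aux_combo hGdom hGb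
  set w : X → ℝ := fun x => ∑' n : ℕ, ((1 : ℝ) / 2) ^ (n + 1) * G n x with hwdef
  have hucont : Continuous (Tm c w) := by
    rw [Metric.continuous_iff]
    intro b ε hε
    obtain ⟨δ, hδ0, hδ⟩ := hEqc b hε
    exact ⟨δ, hδ0, fun a ha => by rw [Real.dist_eq]; exact hδ w hwdom a ha⟩
  have hudom : Dominated c α (Tm c w) := aux_Tm_dominated hwdom
  have hmain0 : ∀ a b : X, (∀ n : ℕ, G n b - G n a = c a b + α) →
      ∀ v' : X → ℝ, Dominated c α v' → Tm c v' b - Tm c v' a = c a b + α := by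
    intro a b hG v' hv'
    by_contra hne
    have hled : Tm c v' b - Tm c v' a ≤ c a b + α := aux_Tm_dominated hv' a b
    have hlt : Tm c v' b - Tm c v' a < c a b + α := lt_of_le_of_ne hled hne
    set ε := c a b + α - (Tm c v' b - Tm c v' a) with hεdef
    have hε0 : 0 < ε := by rw [hεdef]; linarith
    have hεeq : Tm c v' b - Tm c v' a = c a b + α - ε := by rw [hεdef]; ring
    obtain ⟨δa, hδa0, hδa⟩ := hEqc a (show (0 : ℝ) < ε / 8 by linarith)
    obtain ⟨δb, hδb0, hδb⟩ := hEqc b (show (0 : ℝ) < ε / 8 by linarith)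
    have hcab : ContinuousAt (fun q : X × X => c q.1 q.2) (a, b) := hcont.continuousAt
    rw [Metric.continuousAt_iff] at hcab
    obtain ⟨δc, hδc0, hδc⟩ := hcab (ε / 8) (by linarith)
    have hδ0 : 0 < min δa (min δb δc) := lt_min hδa0 (lt_min hδb0 hδc0)
    obtain ⟨i, hi⟩ := hdseq.exists_dist_lt a hδ0
    obtain ⟨j, hj⟩ := hdseq.exists_dist_lt b hδ0
    obtain ⟨r, hr1, hr2⟩ := exists_rat_btwn (show (3 : ℝ) / 8 * ε < 5 / 8 * ε by linarith)
    have hia : dist (dseq i) a < δa := by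
      rw [dist_comm]
      exact lt_of_lt_of_le hi (min_le_left _ _)
    have hib : dist (dseq j) b < δb := by
      rw [dist_comm]
      exact lt_of_lt_of_le hj (le_trans (min_le_right _ _) (min_le_left _ _))
    have hcc : |c (dseq i) (dseq j) - c a b| < ε / 8 := by
      have hd : dist ((dseq i, dseq j) : X × X) (a, b) < δc := by
        rw [Prod.dist_eq]
        apply max_lt
        · rw [dist_comm]
          exact lt_of_lt_of_le hi (le_trans (min_le_right _ _) (min_le_right _ _))
        · rw [dist_comm]
          exact lt_of_lt_of_le hj (le_trans (min_le_right _ _) (min_le_right _ _))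
      have := hδc hd
      rwa [Real.dist_eq] at this
    have h1 := abs_lt.1 (hδa v' hv' (dseq i) hia)
    have h2 := abs_lt.1 (hδb v' hv' (dseq j) hib)
    have h3 := abs_lt.1 hcc
    have hwit : Tm c v' (dseq j) - Tm c v' (dseq i)
        < c (dseq i) (dseq j) + α - ((r : ℚ) : ℝ) := by
      linarith
    have hgood := hV0good (i, j, r) v' hv' hwit
    dsimp only at hgood
    have hGn := hG (enc (i, j, r))
    rw [hGdef] at hGn
    dsimp only at hGn
    rw [enc.symm_apply_apply] at hGn
    have hd1 := abs_lt.1 (hδa (V0 (i, j, r)) (hV0dom _) (dseq i) hia)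
    have hd2 := abs_lt.1 (hδb (V0 (i, j, r)) (hV0dom _) (dseq j) hib)
    linarith
  have hmain : ∀ x : ℤ → X, IsCalibrated c α (Tm c w) x →
      ∀ v : X → ℝ, Dominated c α v → IsCalibrated c α v x := by
    intro x hx v hv
    have hpu : ∀ m : ℤ, Tm c w (x (m + 1)) - Tm c w (x m) = c (x m) (x (m + 1)) + α :=
      fun m => aux_pairwise hx m
    have hpw : ∀ m : ℤ, w (x (m + 1)) - w (x m) = c (x m) (x (m + 1)) + α := by
      intro m
      have ht1 := (aux_Tm_tight hwdom (hpu m)).2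
      have ht2 := (aux_Tm_tight hwdom (hpu (m + 1))).1
      linarith
    have hpG : ∀ m : ℤ, ∀ n : ℕ, G n (x (m + 1)) - G n (x m) = c (x m) (x (m + 1)) + α :=
      fun m => hcombo (x m) (x (m + 1)) (hpw m)
    have hT : ∀ m : ℤ, Tm c v (x (m + 1)) - Tm c v (x m) = c (x m) (x (m + 1)) + α :=
      fun m => hmain0 (x m) (x (m + 1)) (hpG m) v hv
    have hpv : ∀ m : ℤ, v (x (m + 1)) - v (x m) = c (x m) (x (m + 1)) + α := by
      intro m
      have ht1 := (aux_Tm_tight hv (hT m)).2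
      have ht2 := (aux_Tm_tight hv (hT (m + 1))).1
      linarith
    exact aux_calibrated_of_pairwise hpv
  refine ⟨Tm c w, hucont, hudom, hmain, ?_, ?_, ?_⟩
  · ext q
    constructor
    · rintro ⟨x, n, hx, h1, h2⟩
      intro v hv
      exact ⟨x, n, hmain x hx v hv, h1, h2⟩
    · intro hq
      exact hq (Tm c w) hudom
  · ext p1
    constructor
    · rintro ⟨x, hx, h0⟩
      intro v hv
      exact ⟨x, hmain x hx v hv, h0⟩
    · intro hp
      exact hp (Tm c w) hudom
  · ext p1
    constructor
    · intro hp
      obtain ⟨x, hx, h0⟩ := hp (Tm c w) hudom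
      refine ⟨(p1, x 1), ?_, rfl⟩
      intro v hv
      refine ⟨x, 0, hmain x hx v hv, ?_, ?_⟩
      · simpa using h0
      · simp
    · rintro ⟨⟨a, b⟩, hq, rfl⟩
      intro v hv
      obtain ⟨x, n, hx, h1, h2⟩ := hq v hv
      exact ⟨fun i => x (n + i), aux_calibrated_shift hx n, by simpa using h1⟩
end

section
/- Let u be a critical sub-solution and x ∈ X. If x ∈ A_u, then for every p ∈ ℕ one has (T⁻)ᵖu(x) + p·α[0] = u(x) = (T⁺)ᵖu(x) − p·α[0]. Conversely, if u is continuous and (T⁻)ᵖu(x) + p·α[0] = u(x) = (T⁺)ᵖu(x) − p·α[0] for every p ∈ ℕ, then x ∈ A_u. -/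
open Metric Set Filter Topology

set_option linter.unusedSectionVars false
set_option maxHeartbeats 1000000

section AubryAux
variable {X : Type*} [MetricSpace X] [Nonempty X]
variable {c : X → X → ℝ} {α : ℝ} {u : X → ℝ}

lemma tm_iter_ge (hu : Dominated c α u) (p : ℕ) (x : X) :
    u x - p * α ≤ (Tm c)^[p] u x := by
  induction p generalizing x with
  | zero => simp
  | succ p ih =>
    rw [Function.iterate_succ_apply']
    refine le_ciInf fun y => ?_
    have h1 := ih y
    have h2 := hu y x
    push_cast
    nlinarith [h1, h2]

lemma tp_iter_le (hu : Dominated c α u) (p : ℕ) (x : X) :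
    (Tp c)^[p] u x ≤ u x + p * α := by
  induction p generalizing x with
  | zero => simp
  | succ p ih =>
    rw [Function.iterate_succ_apply']
    refine ciSup_le fun y => ?_
    have h1 := ih y
    have h2 := hu x y
    push_cast
    nlinarith [h1, h2]

lemma cal_step {w : ℤ → X} (hcal : IsCalibrated c α u w) (m : ℤ) :
    u (w (m + 1)) = u (w m) + c (w m) (w (m + 1)) + α := by
  have h := hcal m 1
  simpa using h

lemma tm_iter_le_of_cal (hu : Dominated c α u) {w : ℤ → X}
    (hcal : IsCalibrated c α u w) (p : ℕ) (m : ℤ) :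
    (Tm c)^[p] u (w m) ≤ u (w m) - p * α := by
  induction p generalizing m with
  | zero => simp
  | succ p ih =>
    rw [Function.iterate_succ_apply']
    have hbdd : BddBelow (Set.range fun y => (Tm c)^[p] u y + c y (w m)) := by
      refine ⟨u (w m) - (p + 1) * α, ?_⟩
      rintro r ⟨y, rfl⟩
      beta_reduce
      have h1 := tm_iter_ge hu p y
      have h2 := hu y (w m)
      nlinarith [h1, h2]
    have hle : Tm c ((Tm c)^[p] u) (w m) ≤ (Tm c)^[p] u (w (m - 1)) + c (w (m - 1)) (w m) :=
      ciInf_le hbdd (w (m - 1))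
    have hstep := cal_step hcal (m - 1)
    rw [sub_add_cancel] at hstep
    have h3 := ih (m - 1)
    push_cast
    nlinarith [hle, h3, hstep]

lemma tp_iter_ge_of_cal (hu : Dominated c α u) {w : ℤ → X}
    (hcal : IsCalibrated c α u w) (p : ℕ) (m : ℤ) :
    u (w m) + p * α ≤ (Tp c)^[p] u (w m) := by
  induction p generalizing m with
  | zero => simp
  | succ p ih =>
    rw [Function.iterate_succ_apply']
    have hbdd : BddAbove (Set.range fun y => (Tp c)^[p] u y - c (w m) y) := by
      refine ⟨u (w m) + (p + 1) * α, ?_⟩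
      rintro r ⟨y, rfl⟩
      beta_reduce
      have h1 := tp_iter_le hu p y
      have h2 := hu (w m) y
      nlinarith [h1, h2]
    have hle : (Tp c)^[p] u (w (m + 1)) - c (w m) (w (m + 1)) ≤ Tp c ((Tp c)^[p] u) (w m) :=
      le_ciSup hbdd (w (m + 1))
    have hstep := cal_step hcal m
    have h3 := ih (m + 1)
    push_cast
    nlinarith [hle, h3, hstep]

lemma tm_chain (hu : Dominated c α u) (p : ℕ) (z : X) {ε : ℝ} (hε : 0 < ε) :
    ∃ a : ℕ → X, a p = z ∧
      u (a 0) + ∑ i ∈ Finset.range p, c (a i) (a (i + 1)) ≤ (Tm c)^[p] u z + ε := by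
  induction p generalizing z ε with
  | zero => exact ⟨fun _ => z, rfl, by simp [hε.le]⟩
  | succ p ih =>
    have hlt : (⨅ y, ((Tm c)^[p] u y + c y z)) < (Tm c)^[p + 1] u z + ε / 2 := by
      rw [Function.iterate_succ_apply']
      show Tm c ((Tm c)^[p] u) z < Tm c ((Tm c)^[p] u) z + ε / 2
      linarith
    obtain ⟨y, hy⟩ := exists_lt_of_ciInf_lt hlt
    obtain ⟨a, hap, hasum⟩ := ih y (half_pos hε)
    refine ⟨fun i => if i ≤ p then a i else z, by simp, ?_⟩
    rw [Finset.sum_range_succ]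
    have he1 : ∀ i ∈ Finset.range p,
        c (if i ≤ p then a i else z) (if i + 1 ≤ p then a (i + 1) else z) = c (a i) (a (i + 1)) := by
      intro i hi
      rw [Finset.mem_range] at hi
      rw [if_pos (by omega), if_pos (by omega)]
    rw [Finset.sum_congr rfl he1]
    beta_reduce
    rw [if_pos (Nat.zero_le p), if_pos (le_refl p),
      if_neg (by omega : ¬ p + 1 ≤ p), hap]
    linarith [hy, hasum]

lemma tp_chain (hu : Dominated c α u) (p : ℕ) (z : X) {ε : ℝ} (hε : 0 < ε) :
    ∃ b : ℕ → X, b 0 = z ∧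
      (Tp c)^[p] u z - ε ≤ u (b p) - ∑ i ∈ Finset.range p, c (b i) (b (i + 1)) := by
  induction p generalizing z ε with
  | zero => exact ⟨fun _ => z, rfl, by simp [hε.le]⟩
  | succ p ih =>
    have hlt : (Tp c)^[p + 1] u z - ε / 2 < ⨆ y, ((Tp c)^[p] u y - c z y) := by
      rw [Function.iterate_succ_apply']
      show Tp c ((Tp c)^[p] u) z - ε / 2 < Tp c ((Tp c)^[p] u) z
      linarith
    obtain ⟨y, hy⟩ := exists_lt_of_lt_ciSup hlt
    obtain ⟨b, hb0, hbsum⟩ := ih y (half_pos hε)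
    refine ⟨fun i => match i with | 0 => z | Nat.succ j => b j, rfl, ?_⟩
    rw [Finset.sum_range_succ']
    show (Tp c)^[p + 1] u z - ε ≤
      u (b p) - (∑ i ∈ Finset.range p, c (b i) (b (i + 1)) + c z (b 0))
    rw [hb0]
    linarith [hy, hbsum]

lemma isCalibrated_of_step {f : ℤ → X}
    (hstep : ∀ t : ℤ, u (f (t + 1)) = u (f t) + c (f t) (f (t + 1)) + α) :
    IsCalibrated c α u f := by
  intro m k
  induction k with
  | zero => simp
  | succ k ih =>
    have h1 := hstep (m + k)
    rw [Finset.sum_range_succ]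
    push_cast
    push_cast at ih h1
    have e : m + ((k : ℤ) + 1) = m + (k : ℤ) + 1 := by ring
    rw [e, h1, ih]
    ring

lemma lipschitz_of_dominated {B K : ℝ} (hB : 1 ≤ B) (hK : 0 < K)
    (hlen : IsBLengthSpaceAtScale X B K) (hub : UniformlyBounded c)
    (hu : Dominated c α u) :
    ∃ L M : ℝ, 0 ≤ L ∧ ∀ a b : X, u b - u a ≤ L * dist a b + M := by
  obtain ⟨A, hA⟩ := hub K
  obtain ⟨x0⟩ := (inferInstance : Nonempty X)
  have hAα : 0 ≤ A + α := by
    have h1 := hu x0 x0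
    have h2 := hA x0 x0 (by simp [hK.le])
    linarith
  set T : ℝ := 2 * (A + α) / K with hT
  have hT0 : 0 ≤ T := div_nonneg (by linarith) hK.le
  have hTK : T * K = 2 * (A + α) := div_mul_cancel₀ _ hK.ne'
  have key : ∀ n : ℕ, ∀ q : ℕ → X, (∀ i < n, dist (q i) (q (i + 1)) ≤ K) →
      u (q n) - u (q 0) ≤ (A + α) + T * ∑ i ∈ Finset.range n, dist (q i) (q (i + 1)) := by
    intro n
    induction n using Nat.strong_induction_on with
    | _ n ih =>
      intro q hq
      set S := ∑ i ∈ Finset.range n, dist (q i) (q (i + 1)) with hS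
      have hSnn : 0 ≤ S := Finset.sum_nonneg fun i _ => dist_nonneg
      by_cases hSK : S ≤ K
      · have hdist : dist (q 0) (q n) ≤ K := le_trans (dist_le_range_sum_dist q n) hSK
        have h1 := hu (q 0) (q n)
        have h2 := hA (q 0) (q n) hdist
        nlinarith [mul_nonneg hT0 hSnn]
      · push_neg at hSK
        have hn : 1 ≤ n := by
          rcases Nat.eq_zero_or_pos n with h | h
          · exfalso; rw [h] at hS; simp at hS; rw [hS] at hSK; linarith
          · exact h
        set P : ℕ → Prop := fun j => ∑ i ∈ Finset.range j, dist (q i) (q (i + 1)) ≤ K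
        have hP1 : P 1 := by
          show ∑ i ∈ Finset.range 1, dist (q i) (q (i + 1)) ≤ K
          rw [Finset.sum_range_one]
          exact hq 0 (by omega)
        set j := Nat.findGreatest P n with hj
        have hj1 : 1 ≤ j := Nat.le_findGreatest hn hP1
        have hjn : j ≤ n := Nat.findGreatest_le n
        have hPj : P j := Nat.findGreatest_spec hn hP1
        have hjlt : j < n := by
          rcases lt_or_eq_of_le hjn with h | h
          · exact h
          · exfalso; rw [h] at hPj; exact absurd hPj (not_le.mpr hSK)
        have hPj1 : ¬ P (j + 1) := by
          apply Nat.findGreatest_is_greatest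
          · rw [← hj]; omega
          · omega
        have hPj1' : K < ∑ i ∈ Finset.range (j + 1), dist (q i) (q (i + 1)) := not_le.1 hPj1
        -- tail chain
        set m := n - (j + 1) with hm
        have hmn : m < n := by omega
        set S2 := ∑ i ∈ Finset.range m, dist (q (j + 1 + i)) (q (j + 1 + i + 1)) with hS2
        have htail : u (q (j + 1 + m)) - u (q (j + 1)) ≤ A + α + T * S2 :=
          ih m hmn (fun i => q (j + 1 + i)) (fun i hi => hq (j + 1 + i) (by omega))
        have e1 : j + 1 + m = n := by omega
        rw [e1] at htail
        have hsplit : S = (∑ i ∈ Finset.range (j + 1), dist (q i) (q (i + 1))) + S2 := by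
          rw [hS, hS2]
          have : n = (j + 1) + m := by omega
          rw [this, Finset.sum_range_add]
        -- two short hops
        have hhop1 : dist (q 0) (q j) ≤ K := by
          have h := dist_le_range_sum_dist q j
          exact le_trans h hPj
        have hhop2 : dist (q j) (q (j + 1)) ≤ K := hq j (by omega)
        have hu1 := hu (q 0) (q j)
        have hu2 := hu (q j) (q (j + 1))
        have hc1 := hA (q 0) (q j) hhop1
        have hc2 := hA (q j) (q (j + 1)) hhop2
        have hS2le : S2 ≤ S - K := by
          have := hsplit
          nlinarith [hPj1']
        have hmono : T * S2 ≤ T * (S - K) := mul_le_mul_of_nonneg_left hS2le hT0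
        have hexp : T * (S - K) = T * S - T * K := by ring
        linarith [htail, hmono, hTK, hexp]
  refine ⟨T * B, A + α, mul_nonneg hT0 (by linarith), fun a b => ?_⟩
  obtain ⟨n, q, hq0, hqn, hqstep, hqsum⟩ := hlen a b
  have := key n q hqstep
  rw [hq0, hqn] at this
  have h2 : T * ∑ i ∈ Finset.range n, dist (q i) (q (i + 1)) ≤ T * (B * dist a b) :=
    mul_le_mul_of_nonneg_left hqsum hT0
  nlinarith [this, h2]

lemma chain_family (hu : Dominated c α u)
    {L M C D : ℝ}
    (hLip : ∀ a b : X, u b - u a ≤ L * dist a b + M)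
    (hC : ∀ a b : X, (L + 1) * dist a b - C ≤ c a b)
    (hD : D = max (C + M - α + 1) 0)
    (x : X) (p : ℕ)
    (h1 : (Tm c)^[p] u x + p * α = u x)
    (h2 : u x = (Tp c)^[p] u x - p * α) :
    ∃ w : ℤ → X, w 0 = x ∧ (∀ j : ℤ, dist (w j) x ≤ |(j : ℝ)| * D) ∧
      ∀ t : ℤ, t.natAbs + 1 < p →
        c (w t) (w (t + 1)) + α - (u (w (t + 1)) - u (w t)) ≤ 1 / (p + 1) := by
  have hD0 : 0 ≤ D := hD ▸ le_max_right _ _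
  set ε : ℝ := 1 / (2 * (p + 1)) with hεdef
  have hεpos : 0 < ε := by positivity
  have h2ε : 2 * ε = 1 / (p + 1) := by
    rw [hεdef]; field_simp
  have hε1 : 2 * ε ≤ 1 := by
    rw [h2ε]
    rw [div_le_one (by positivity)]
    have : (0:ℝ) ≤ p := Nat.cast_nonneg p
    linarith
  obtain ⟨a, hap, ha⟩ := tm_chain hu p x hεpos
  obtain ⟨b, hb0, hb⟩ := tp_chain hu p x hεpos
  rw [show (Tm c)^[p] u x = u x - p * α by linarith] at ha
  rw [show (Tp c)^[p] u x = u x + p * α by linarith] at hb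
  set v : ℕ → X := fun i => if i ≤ p then a i else b (i - p) with hv
  have hva : ∀ i, i ≤ p → v i = a i := fun i hi => if_pos hi
  have hvb : ∀ i, v (p + i) = b i := by
    intro i
    rcases Nat.eq_zero_or_pos i with rfl | hi
    · rw [hva (p + 0) (by omega)]
      show a p = b 0
      rw [hap, hb0]
    · show (if p + i ≤ p then a (p + i) else b (p + i - p)) = b i
      rw [if_neg (by omega)]
      congr 1
      omega
  have hsplit : ∑ i ∈ Finset.range (p + p), c (v i) (v (i + 1)) =
      (∑ i ∈ Finset.range p, c (a i) (a (i + 1))) +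
        ∑ i ∈ Finset.range p, c (b i) (b (i + 1)) := by
    rw [Finset.sum_range_add]
    congr 1
    · refine Finset.sum_congr rfl fun i hi => ?_
      rw [Finset.mem_range] at hi
      rw [hva i (by omega), hva (i + 1) (by omega)]
    · refine Finset.sum_congr rfl fun i hi => ?_
      rw [show p + i + 1 = p + (i + 1) from by omega, hvb i, hvb (i + 1)]
  have htel : ∑ i ∈ Finset.range (p + p), (u (v (i + 1)) - u (v i)) = u (b p) - u (a 0) := by
    rw [Finset.sum_range_sub (fun i => u (v i)), hvb p, hva 0 (Nat.zero_le p)]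
  have hsum2 : ∑ i ∈ Finset.range (p + p),
      (c (v i) (v (i + 1)) + α - (u (v (i + 1)) - u (v i))) ≤ 2 * ε := by
    have heq : ∑ i ∈ Finset.range (p + p),
        (c (v i) (v (i + 1)) + α - (u (v (i + 1)) - u (v i)))
        = (∑ i ∈ Finset.range (p + p), c (v i) (v (i + 1))) + (p + p : ℕ) * α
          - (u (b p) - u (a 0)) := by
      rw [← htel, Finset.sum_sub_distrib, Finset.sum_add_distrib, Finset.sum_const,
        Finset.card_range, nsmul_eq_mul]
    rw [heq, hsplit]
    push_cast
    linarith [ha, hb]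
  have hstep0 : ∀ i ∈ Finset.range (p + p),
      c (v i) (v (i + 1)) + α - (u (v (i + 1)) - u (v i)) ≤ 2 * ε := by
    intro i hi
    have hnn : ∀ j ∈ Finset.range (p + p),
        0 ≤ c (v j) (v (j + 1)) + α - (u (v (j + 1)) - u (v j)) :=
      fun j _ => by have := hu (v j) (v (j + 1)); linarith
    have := Finset.single_le_sum hnn hi
    linarith [hsum2]
  have hstepd : ∀ i ∈ Finset.range (p + p), dist (v i) (v (i + 1)) ≤ D := by
    intro i hi
    have h1' := hstep0 i hi
    have h2' := hLip (v i) (v (i + 1))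
    have h3' := hC (v i) (v (i + 1))
    have : dist (v i) (v (i + 1)) ≤ C + M - α + 1 := by linarith
    rw [hD]
    exact le_trans this (le_max_left _ _)
  have hvd : ∀ s t : ℕ, s ≤ t → t ≤ p + p → dist (v s) (v t) ≤ ((t : ℝ) - s) * D := by
    intro s t hst htp
    have h : dist (v s) (v (s + (t - s))) ≤
        ∑ i ∈ Finset.range (t - s), dist (v (s + i)) (v (s + i + 1)) :=
      dist_le_range_sum_dist (fun i => v (s + i)) (t - s)
    have he : s + (t - s) = t := by omega
    rw [he] at h
    have hsum : ∑ i ∈ Finset.range (t - s), dist (v (s + i)) (v (s + i + 1)) ≤ (t - s : ℕ) • D := by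
      apply Finset.sum_le_card_nsmul _ _ D ?_ |>.trans
      · rw [Finset.card_range]
      · intro i hi
        rw [Finset.mem_range] at hi
        exact hstepd (s + i) (Finset.mem_range.2 (by omega))
    rw [nsmul_eq_mul, Nat.cast_sub hst] at hsum
    exact h.trans hsum
  have hvp : v p = x := by rw [hva p le_rfl, hap]
  refine ⟨fun j => v (min (p + j).toNat (p + p)), ?_, ?_, ?_⟩
  · show v (min (p + (0:ℤ)).toNat (p + p)) = x
    rw [show min (p + (0:ℤ)).toNat (p + p) = p from by omega, hvp]
  · intro j
    beta_reduce
    set s := min (p + j).toNat (p + p) with hs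
    rcases le_or_gt 0 j with hj | hj
    · have hsp : p ≤ s := by omega
      have hsle : s ≤ p + p := by omega
      have h := hvd p s hsp hsle
      rw [hvp, dist_comm] at h
      have hcast : (s : ℝ) - p ≤ |(j : ℝ)| := by
        rw [abs_of_nonneg (by exact_mod_cast hj)]
        have hs2 : (s : ℤ) ≤ p + j := by omega
        have : (s : ℝ) ≤ (p : ℝ) + (j : ℝ) := by exact_mod_cast hs2
        linarith
      calc dist (v s) x ≤ ((s : ℝ) - p) * D := h
        _ ≤ |(j : ℝ)| * D := mul_le_mul_of_nonneg_right hcast hD0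
    · have hsp : s ≤ p := by omega
      have h := hvd s p hsp (by omega)
      rw [hvp] at h
      have hcast : (p : ℝ) - s ≤ |(j : ℝ)| := by
        rw [abs_of_neg (by exact_mod_cast hj)]
        have hs2 : (p : ℤ) - s ≤ -j := by omega
        have : (p : ℝ) - (s : ℝ) ≤ -(j : ℝ) := by exact_mod_cast hs2
        linarith
      calc dist (v s) x ≤ ((p : ℝ) - s) * D := h
        _ ≤ |(j : ℝ)| * D := mul_le_mul_of_nonneg_right hcast hD0
  · intro t ht
    beta_reduce
    set s := (p + t).toNat with hs
    have h2' : s < p + p := by omega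
    have e1 : min (p + t).toNat (p + p) = s := by omega
    have e2 : min (p + (t + 1)).toNat (p + p) = s + 1 := by omega
    rw [e1, e2]
    have := hstep0 s (Finset.mem_range.2 h2')
    linarith [h2ε.symm.le, this]

end AubryAux

theorem mem_aubry_iff_iterates_constant {X : Type*} [MetricSpace X] [Nonempty X] [ProperSpace X]
    {B K : ℝ} (hB : 1 ≤ B) (hK : 0 < K) (hlen : IsBLengthSpaceAtScale X B K)
    {c : X → X → ℝ} (hcont : Continuous fun q : X × X => c q.1 q.2)
    (hsl : UniformlySuperlinear c) (hub : UniformlyBounded c)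
    {u : X → ℝ} (hu : Dominated c (critValue c) u) (x : X) :
    (x ∈ projAubry c u →
      ∀ p : ℕ, (Tm c)^[p] u x + p * critValue c = u x ∧
        u x = (Tp c)^[p] u x - p * critValue c) ∧
    (Continuous u →
      (∀ p : ℕ, (Tm c)^[p] u x + p * critValue c = u x ∧
        u x = (Tp c)^[p] u x - p * critValue c) →
      x ∈ projAubry c u) := by
  constructor
  · rintro ⟨w, hcal, hw0⟩ p
    constructor
    · have hge := tm_iter_ge hu p x
      have hle := tm_iter_le_of_cal hu hcal p 0
      rw [hw0] at hle
      linarith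
    · have hle := tp_iter_le hu p x
      have hge := tp_iter_ge_of_cal hu hcal p 0
      rw [hw0] at hge
      linarith
  · intro hcont_u hiter
    obtain ⟨L, M, hL, hLip⟩ := lipschitz_of_dominated hB hK hlen hub hu
    obtain ⟨C, hC⟩ := hsl (L + 1) (by linarith)
    set D : ℝ := max (C + M - critValue c + 1) 0 with hDdef
    have hfam : ∀ p : ℕ, ∃ w : ℤ → X, w 0 = x ∧
        (∀ j : ℤ, dist (w j) x ≤ |(j : ℝ)| * D) ∧
        ∀ t : ℤ, t.natAbs + 1 < p →
          c (w t) (w (t + 1)) + critValue c - (u (w (t + 1)) - u (w t)) ≤ 1 / (p + 1) :=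
      fun p => chain_family hu hLip hC hDdef x p (hiter p).1 (hiter p).2
    choose w hw0 hwdist hwstep using hfam
    have hmem : ∀ p, w p ∈ Set.pi Set.univ (fun j : ℤ => closedBall x (|(j : ℝ)| * D)) :=
      fun p j _ => mem_closedBall.2 (hwdist p j)
    have hcpt : IsCompact (Set.pi Set.univ fun j : ℤ => closedBall x (|(j : ℝ)| * D)) :=
      isCompact_univ_pi fun j => isCompact_closedBall x _
    obtain ⟨f, hfS, φ, hφ, hconv⟩ := hcpt.isSeqCompact hmem
    have hpt : ∀ j : ℤ, Tendsto (fun n => w (φ n) j) atTop (𝓝 (f j)) :=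
      fun j => tendsto_pi_nhds.1 hconv j
    have hf0 : f 0 = x := by
      refine tendsto_nhds_unique (hpt 0) ?_
      simp only [hw0]
      exact tendsto_const_nhds
    have hstep : ∀ t : ℤ, u (f (t + 1)) = u (f t) + c (f t) (f (t + 1)) + critValue c := by
      intro t
      have hle := hu (f t) (f (t + 1))
      have hge : c (f t) (f (t + 1)) + critValue c - (u (f (t + 1)) - u (f t)) ≤ 0 := by
        have hc' : Tendsto (fun n => c (w (φ n) t) (w (φ n) (t + 1))) atTop
            (𝓝 (c (f t) (f (t + 1)))) :=
          (hcont.tendsto (f t, f (t + 1))).comp ((hpt t).prodMk_nhds (hpt (t + 1)))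
        have hu1 : Tendsto (fun n => u (w (φ n) (t + 1))) atTop (𝓝 (u (f (t + 1)))) :=
          (hcont_u.tendsto _).comp (hpt (t + 1))
        have hu2 : Tendsto (fun n => u (w (φ n) t)) atTop (𝓝 (u (f t))) :=
          (hcont_u.tendsto _).comp (hpt t)
        have ht1 : Tendsto (fun n => c (w (φ n) t) (w (φ n) (t + 1)) + critValue c
            - (u (w (φ n) (t + 1)) - u (w (φ n) t))) atTop
            (𝓝 (c (f t) (f (t + 1)) + critValue c - (u (f (t + 1)) - u (f t)))) :=
          (hc'.add tendsto_const_nhds).sub (hu1.sub hu2)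
        have ht2 : Tendsto (fun n : ℕ => 1 / ((φ n : ℝ) + 1)) atTop (𝓝 0) :=
          tendsto_one_div_add_atTop_nhds_zero_nat.comp hφ.tendsto_atTop
        refine le_of_tendsto_of_tendsto ht1 ht2 ?_
        refine Filter.eventually_atTop.2 ⟨t.natAbs + 2, fun n hn => ?_⟩
        refine hwstep (φ n) t ?_
        have : n ≤ φ n := hφ.le_apply
        omega
      linarith
    exact ⟨f, isCalibrated_of_step hstep, hf0⟩
end

section
/- For every x ∈ X, the quantity F(x) = sup_u (T⁻u(x) + α[0] − u(x)), where the supremum is over all critical sub-solutions u, is finite and equals T⁻φ_x(x) + α[0]. Moreover, if x is not isolated, then F(x) = lim_{y→x, y≠x} φ_x(y). -/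
open Metric Set Filter Topology

section AuxJump

variable {X : Type*} [MetricSpace X] [Nonempty X] {c : X → X → ℝ}

private lemma dom_mono {α β : ℝ} {u : X → ℝ} (h : Dominated c α u) (hab : α ≤ β) :
    Dominated c β u := fun a b => (h a b).trans (by linarith)

private lemma exists_dom_add (hsl : UniformlySuperlinear c) {ε : ℝ} (hε : 0 < ε) :
    ∃ u : X → ℝ, Dominated c (critValue c + ε) u := by
  obtain ⟨C, hC⟩ := hsl 0 le_rfl
  have hne : {α : ℝ | ∃ u : X → ℝ, Dominated c α u}.Nonempty := by
    refine ⟨C, fun _ => (0:ℝ), fun a b => ?_⟩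
    have := hC a b
    simp only [zero_mul, zero_sub] at this
    linarith
  have hlt : sInf {α : ℝ | ∃ u : X → ℝ, Dominated c α u} < critValue c + ε := by
    have : critValue c = sInf {α : ℝ | ∃ u : X → ℝ, Dominated c α u} := rfl
    linarith
  obtain ⟨β, hβmem, hβlt⟩ := exists_lt_of_csInf_lt hne hlt
  obtain ⟨u, hu⟩ := hβmem
  exact ⟨u, dom_mono hu hβlt.le⟩

private lemma exists_crit (hsl : UniformlySuperlinear c) (x : X) :
    ∃ u : X → ℝ, Dominated c (critValue c) u ∧ u x = 0 := by
  set α₀ := critValue c with hα₀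
  have hvex : ∀ n : ℕ, ∃ v : X → ℝ, Dominated c (α₀ + 1/((n:ℝ)+1)) v ∧ v x = 0 := by
    intro n
    obtain ⟨u, hu⟩ := exists_dom_add hsl (by positivity : (0:ℝ) < 1/((n:ℝ)+1))
    refine ⟨fun y => u y - u x, fun a b => ?_, by simp⟩
    have := hu a b
    simpa using (by linarith : u b - u x - (u a - u x) ≤ c a b + (α₀ + 1/((n:ℝ)+1)))
  choose v hv hvx using hvex
  have honele : ∀ n : ℕ, 1/((n:ℝ)+1) ≤ 1 := by
    intro n
    rw [div_le_one (by positivity)]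
    linarith [Nat.cast_nonneg (α := ℝ) n]
  have hub' : ∀ (n : ℕ) (y : X), v n y ≤ c x y + α₀ + 1 := by
    intro n y
    have h1 := hv n x y
    rw [hvx] at h1
    have := honele n
    linarith
  have hlb' : ∀ (n : ℕ) (y : X), -(c y x + α₀ + 1) ≤ v n y := by
    intro n y
    have h1 := hv n y x
    rw [hvx] at h1
    have := honele n
    linarith
  have hwbdd : ∀ (n : ℕ) (y : X), BddBelow (Set.range fun m : ℕ => v (n + m) y) := by
    intro n y
    exact ⟨-(c y x + α₀ + 1), by rintro r ⟨m, rfl⟩; exact hlb' _ y⟩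
  set w : ℕ → X → ℝ := fun n y => ⨅ m : ℕ, v (n + m) y with hwdef
  have hwle : ∀ (n m : ℕ) (y : X), w n y ≤ v (n + m) y := fun n m y => ciInf_le (hwbdd n y) m
  have hwub : ∀ (n : ℕ) (y : X), w n y ≤ c x y + α₀ + 1 := by
    intro n y
    have := hwle n 0 y
    simp only [Nat.add_zero] at this
    exact this.trans (hub' n y)
  set u : X → ℝ := fun y => ⨆ n : ℕ, w n y with hudef
  have hubdd : ∀ y : X, BddAbove (Set.range fun n : ℕ => w n y) := by
    intro y
    exact ⟨c x y + α₀ + 1, by rintro r ⟨n, rfl⟩; exact hwub n y⟩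
  have hleu : ∀ (n : ℕ) (y : X), w n y ≤ u y := fun n y => le_ciSup (hubdd y) n
  refine ⟨u, fun a b => ?_, ?_⟩
  · have key : ∀ ε : ℝ, 0 < ε → u b - u a ≤ (c a b + α₀) + ε := by
      intro ε hε
      have hub2 : u b ≤ u a + (c a b + α₀ + ε) := by
        refine ciSup_le fun n' => ?_
        obtain ⟨N, hN⟩ := exists_nat_one_div_lt (by linarith : (0:ℝ) < ε/2)
        set N' := max n' N with hN'
        have hinf : ∃ m₀ : ℕ, v (N' + m₀) a < w N' a + ε/2 := by
          refine exists_lt_of_ciInf_lt ?_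
          change w N' a < w N' a + ε/2
          linarith
        obtain ⟨m₀, hm₀⟩ := hinf
        have h1 : w n' b ≤ v (N' + m₀) b := by
          have heq : N' + m₀ = n' + (N' - n' + m₀) := by
            have : n' ≤ N' := le_max_left _ _
            omega
          rw [heq]
          exact hwle n' _ b
        have h2 : v (N' + m₀) b ≤ v (N' + m₀) a + c a b + α₀ + ε/2 := by
          have hd := hv (N' + m₀) a b
          have hmono : 1/(((N' + m₀ : ℕ):ℝ)+1) ≤ 1/((N:ℝ)+1) := by
            apply one_div_le_one_div_of_le (by positivity)
            have : (N:ℕ) ≤ N' + m₀ := le_trans (le_max_right n' N) (Nat.le_add_right _ _)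
            have := (Nat.cast_le (α := ℝ)).2 this
            linarith
          linarith
        have h3 : v (N' + m₀) a ≤ u a + ε/2 := le_trans hm₀.le (by linarith [hleu N' a])
        linarith
      linarith
    exact le_of_forall_pos_le_add fun ε hε => key ε hε
  · have hwx : ∀ n : ℕ, w n x = 0 := by
      intro n
      have : (fun m : ℕ => v (n + m) x) = fun _ => (0:ℝ) := by
        funext m; exact hvx _
      show (⨅ m : ℕ, v (n + m) x) = 0
      rw [this, ciInf_const]
    show (⨆ n : ℕ, w n x) = 0
    have : (fun n : ℕ => w n x) = fun _ => (0:ℝ) := funext hwx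
    rw [this, ciSup_const]

private lemma maneSet_bddAbove (c : X → X → ℝ) (x y : X) :
    BddAbove {r : ℝ | ∃ u : X → ℝ, Dominated c (critValue c) u ∧ r = u y - u x} :=
  ⟨c x y + critValue c, by rintro r ⟨u, hu, rfl⟩; exact hu x y⟩

private lemma le_mane {u : X → ℝ} (hu : Dominated c (critValue c) u) (x y : X) :
    u y - u x ≤ mane c x y :=
  le_csSup (maneSet_bddAbove c x y) ⟨u, hu, rfl⟩

private lemma mane_le_of (hsl : UniformlySuperlinear c) (x y : X) :
    mane c x y ≤ c x y + critValue c := by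
  obtain ⟨u₀, hu₀, _⟩ := exists_crit hsl x
  exact csSup_le ⟨u₀ y - u₀ x, u₀, hu₀, rfl⟩ (by rintro r ⟨u, hu, rfl⟩; exact hu x y)

private lemma mane_self (hsl : UniformlySuperlinear c) (x : X) : mane c x x = 0 := by
  obtain ⟨u₀, hu₀, _⟩ := exists_crit hsl x
  apply le_antisymm
  · exact csSup_le ⟨u₀ x - u₀ x, u₀, hu₀, rfl⟩ (by rintro r ⟨u, hu, rfl⟩; simp)
  · simpa using le_mane hu₀ x x

private lemma mane_dom (hsl : UniformlySuperlinear c) (x : X) :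
    Dominated c (critValue c) (mane c x) := by
  intro a b
  rw [sub_le_iff_le_add]
  obtain ⟨u₀, hu₀, _⟩ := exists_crit hsl x
  refine csSup_le ⟨u₀ b - u₀ x, u₀, hu₀, rfl⟩ ?_
  rintro r ⟨u, hu, rfl⟩
  have h1 : u a - u x ≤ mane c x a := le_mane hu x a
  have h2 := hu a b
  linarith

private lemma tm_bddBelow {u : X → ℝ} (hu : Dominated c (critValue c) u) (x : X) :
    BddBelow (Set.range fun y => u y + c y x) :=
  ⟨u x - critValue c, by rintro r ⟨y, rfl⟩; have := hu y x; simp only; linarith⟩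

private lemma Tm_le {u : X → ℝ} (hu : Dominated c (critValue c) u) (x y : X) :
    Tm c u x ≤ u y + c y x :=
  ciInf_le (tm_bddBelow hu x) y

private lemma le_Tm {u : X → ℝ} (hu : Dominated c (critValue c) u) (x : X) :
    u x - critValue c ≤ Tm c u x :=
  le_ciInf fun y => by have := hu y x; linarith

private lemma mane_eq_Tm (hsl : UniformlySuperlinear c) {x y : X} (hxy : y ≠ x) :
    mane c x y = Tm c (mane c x) y + critValue c := by
  have hdom := mane_dom hsl x
  apply le_antisymm
  · have := le_Tm hdom y; linarith
  · by_contra hlt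
    push_neg at hlt
    set φ := mane c x with hφ
    set ε := Tm c φ y + critValue c - φ y with hε
    have hεpos : 0 < ε := by linarith
    classical
    set u : X → ℝ := fun b => if b = y then φ y + ε else φ b with hu
    have huy : u y = φ y + ε := by rw [hu]; simp
    have hune : ∀ b, b ≠ y → u b = φ b := by
      intro b hb; rw [hu]; simp [hb]
    have hudom : Dominated c (critValue c) u := by
      intro a b
      rcases eq_or_ne b y with hb | hb
      · rcases eq_or_ne a y with ha | ha
        · rw [ha, hb]
          have h0 := hdom y y
          linarith
        · rw [hb, huy, hune a ha]
          have hTle := Tm_le hdom y a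
          linarith
      · rw [hune b hb]
        rcases eq_or_ne a y with ha | ha
        · rw [ha, huy]
          have := hdom y b
          linarith
        · rw [hune a ha]; exact hdom a b
    have hcontr : u y - u x ≤ φ y := le_mane hudom x y
    have hux : u x = φ x := hune x fun h => hxy h.symm
    have hφx : φ x = 0 := mane_self hsl x
    rw [huy, hux, hφx] at hcontr
    linarith

private lemma coarse_lip {B K : ℝ} (hB : 1 ≤ B) (hK : 0 < K)
    (hlen : IsBLengthSpaceAtScale X B K) {A : ℝ} (hA : ∀ x y : X, dist x y ≤ K → c x y ≤ A)
    {u : X → ℝ} (hu : Dominated c (critValue c) u) (a b : X) :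
    u b - u a ≤ (2 * B * max (A + critValue c) 0 / K) * dist a b + max (A + critValue c) 0 := by
  classical
  set M : ℝ := max (A + critValue c) 0 with hM
  have hM0 : 0 ≤ M := le_max_right _ _
  obtain ⟨n, p, hp0, hpn, hstep, hsum⟩ := hlen a b
  have hQ : ∀ j : ℕ, ∃ i : ℕ, n < i ∨ (j < i ∧ i ≤ n ∧ K < dist (p j) (p i)) :=
    fun j => ⟨n + 1, Or.inl (Nat.lt_succ_self n)⟩
  set nxt : ℕ → ℕ := fun j => Nat.find (hQ j) - 1 with hnxt
  have hfind_le : ∀ j, Nat.find (hQ j) ≤ n + 1 :=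
    fun j => Nat.find_le (Or.inl (Nat.lt_succ_self n))
  have hfind_gt : ∀ j, j ≤ n → j < Nat.find (hQ j) := by
    intro j hj
    rw [Nat.lt_find_iff]
    intro m hm hPm
    rcases hPm with h | ⟨h1, h2, _⟩
    · omega
    · omega
  have hfind_gt' : ∀ j, j < n → j + 1 < Nat.find (hQ j) := by
    intro j hj
    rw [Nat.lt_find_iff]
    intro m hm hPm
    rcases hPm with h | ⟨h1, h2, h3⟩
    · omega
    · have hm' : m = j + 1 := by omega
      subst hm'
      exact absurd h3 (not_lt.2 (hstep j hj))
  have hnxt_le : ∀ j, nxt j ≤ n := fun j => by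
    have := hfind_le j; simp only [hnxt]; omega
  have hnxt_gt : ∀ j, j < n → j < nxt j := by
    intro j hj
    have := hfind_gt' j hj
    simp only [hnxt]; omega
  have hnxt_dist : ∀ j, j ≤ n → dist (p j) (p (nxt j)) ≤ K := by
    intro j hj
    rcases eq_or_lt_of_le hj with rfl | hjn
    · have h1 := hfind_gt j le_rfl
      have h2 := hfind_le j
      have heq : nxt j = j := by simp only [hnxt]; omega
      rw [heq]; simp [hK.le]
    · have h1 := hfind_gt' j hjn
      have hlt : nxt j < Nat.find (hQ j) := by simp only [hnxt]; omega
      have hmin := Nat.find_min (hQ j) hlt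
      push_neg at hmin
      have hj2 : j < nxt j := by simp only [hnxt]; omega
      exact hmin.2 hj2 (hnxt_le j)
  have hnxt_far : ∀ j, j < n → nxt j < n → K < dist (p j) (p (nxt j + 1)) := by
    intro j hj hjn
    have h1 := hfind_gt' j hj
    have heq : Nat.find (hQ j) = nxt j + 1 := by simp only [hnxt]; omega
    have hspec := Nat.find_spec (hQ j)
    rw [heq] at hspec
    rcases hspec with h | ⟨_, _, h3⟩
    · omega
    · exact h3
  set idx : ℕ → ℕ := fun k => Nat.rec 0 (fun _ ih => nxt ih) k with hidx
  have hidx0 : idx 0 = 0 := rfl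
  have hidxs : ∀ k, idx (k + 1) = nxt (idx k) := fun k => rfl
  have hidxle : ∀ k, idx k ≤ n := by
    intro k
    induction k with
    | zero => exact Nat.zero_le n
    | succ k ih => rw [hidxs]; exact hnxt_le _
  have hnxtn : nxt n = n := by
    have h1 := hfind_gt n le_rfl
    have h2 := hfind_le n
    simp only [hnxt]; omega
  have hreach : ∃ k, idx k = n := by
    have key : ∀ k, idx k = n ∨ k ≤ idx k := by
      intro k
      induction k with
      | zero => exact Or.inr le_rfl
      | succ k ih =>
        rcases ih with h | h
        · left; rw [hidxs, h, hnxtn]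
        · rcases eq_or_lt_of_le (hidxle k) with h2 | h2
          · left; rw [hidxs, h2, hnxtn]
          · right
            have := hnxt_gt (idx k) h2
            rw [hidxs]; omega
    rcases key n with h | h
    · exact ⟨n, h⟩
    · exact ⟨n, le_antisymm (hidxle n) h⟩
  set m := Nat.find hreach with hmdef
  have hmn : idx m = n := Nat.find_spec hreach
  have hmlt : ∀ k, k < m → idx k < n :=
    fun k hk => lt_of_le_of_ne (hidxle k) (Nat.find_min hreach hk)
  have htel : u b - u a = ∑ k ∈ Finset.range m, (u (p (idx (k + 1))) - u (p (idx k))) := by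
    rw [Finset.sum_range_sub (fun k => u (p (idx k)))]
    rw [hmn, hidx0, hp0, hpn]
  have hterm : ∀ k ∈ Finset.range m, u (p (idx (k + 1))) - u (p (idx k)) ≤ M := by
    intro k hk
    have h1 := hu (p (idx k)) (p (idx (k + 1)))
    have h2 : dist (p (idx k)) (p (idx (k + 1))) ≤ K := by
      rw [hidxs]; exact hnxt_dist _ (hidxle k)
    have h3 := hA _ _ h2
    have h4 : u (p (idx (k + 1))) - u (p (idx k)) ≤ A + critValue c := by linarith
    exact h4.trans (le_max_left _ _)
  have hsum1 : u b - u a ≤ (m : ℝ) * M := by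
    rw [htel]
    calc ∑ k ∈ Finset.range m, (u (p (idx (k + 1))) - u (p (idx k)))
        ≤ ∑ _k ∈ Finset.range m, M := Finset.sum_le_sum hterm
      _ = (m : ℝ) * M := by rw [Finset.sum_const, Finset.card_range, nsmul_eq_mul]
  have hddef : ∀ i j : ℕ, i ≤ j →
      dist (p i) (p j) ≤ ∑ t ∈ Finset.Ico i j, dist (p t) (p (t + 1)) := by
    intro i j hij
    have hij' : i + (j - i) = j := by omega
    have h := dist_le_range_sum_dist (fun t => p (i + t)) (j - i)
    simp only [Nat.add_zero, hij', ← Nat.add_assoc] at h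
    rw [Finset.sum_Ico_eq_sum_range]
    exact h
  have hblocks : ∀ k : ℕ, 2 * k ≤ m →
      (k : ℝ) * K ≤ ∑ t ∈ Finset.range (idx (2 * k)), dist (p t) (p (t + 1)) := by
    intro k
    induction k with
    | zero =>
      intro _
      simp only [Nat.cast_zero, zero_mul, Nat.mul_zero]
      exact Finset.sum_nonneg fun _ _ => dist_nonneg
    | succ k ih =>
      intro hk2
      have ih' := ih (by omega)
      have h2k : idx (2 * k) < n := hmlt (2 * k) (by omega)
      have h2k1 : idx (2 * k + 1) < n := hmlt (2 * k + 1) (by omega)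
      have hstep1 : idx (2 * k) < idx (2 * k + 1) := by
        rw [hidxs]; exact hnxt_gt _ h2k
      have hstep2 : idx (2 * k + 1) < idx (2 * k + 2) := by
        rw [hidxs (2 * k + 1)]; exact hnxt_gt _ h2k1
      have hfar : K < dist (p (idx (2 * k))) (p (idx (2 * k + 1) + 1)) := by
        have hfar' := hnxt_far (idx (2 * k)) h2k (by rw [← hidxs]; exact h2k1)
        rw [← hidxs] at hfar'
        exact hfar'
      have hchain : K < ∑ t ∈ Finset.Ico (idx (2 * k)) (idx (2 * k + 1) + 1),
          dist (p t) (p (t + 1)) :=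
        lt_of_lt_of_le hfar (hddef _ _ (by omega))
      have hsplit : ∑ t ∈ Finset.range (idx (2 * k + 2)), dist (p t) (p (t + 1)) =
          ∑ t ∈ Finset.range (idx (2 * k)), dist (p t) (p (t + 1)) +
          ∑ t ∈ Finset.Ico (idx (2 * k)) (idx (2 * k + 2)), dist (p t) (p (t + 1)) := by
        rw [Finset.range_eq_Ico, Finset.range_eq_Ico]
        exact (Finset.sum_Ico_consecutive (fun t => dist (p t) (p (t + 1))) (n := idx (2 * k)) (k := idx (2 * k + 2)) (Nat.zero_le _) (by omega)).symm
      have hsub : ∑ t ∈ Finset.Ico (idx (2 * k)) (idx (2 * k + 1) + 1), dist (p t) (p (t + 1)) ≤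
          ∑ t ∈ Finset.Ico (idx (2 * k)) (idx (2 * k + 2)), dist (p t) (p (t + 1)) := by
        apply Finset.sum_le_sum_of_subset_of_nonneg
        · exact Finset.Ico_subset_Ico le_rfl (by omega)
        · intros; exact dist_nonneg
      have h2k2 : 2 * (k + 1) = 2 * k + 2 := by ring
      rw [h2k2]
      push_cast
      rw [hsplit]
      linarith
  have hcount : ((m / 2 : ℕ) : ℝ) * K ≤ B * dist a b := by
    have h1 := hblocks (m / 2) (by omega)
    have h2 : ∑ t ∈ Finset.range (idx (2 * (m / 2))), dist (p t) (p (t + 1)) ≤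
        ∑ t ∈ Finset.range n, dist (p t) (p (t + 1)) :=
      Finset.sum_le_sum_of_subset_of_nonneg
        (Finset.range_subset_range.2 (hidxle _)) (fun _ _ _ => dist_nonneg)
    exact h1.trans (h2.trans hsum)
  have hm_bound : (m : ℝ) ≤ 2 * (B * dist a b) / K + 1 := by
    have h3 : ((m / 2 : ℕ) : ℝ) ≤ B * dist a b / K := by
      rw [le_div_iff₀ hK]; exact hcount
    have h4 : (m : ℝ) ≤ 2 * ((m / 2 : ℕ) : ℝ) + 1 := by
      have h5 : m ≤ 2 * (m / 2) + 1 := by omega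
      exact_mod_cast h5
    have h6 : 2 * (B * dist a b / K) = 2 * (B * dist a b) / K := by ring
    linarith
  have hfinal : u b - u a ≤ (2 * (B * dist a b) / K + 1) * M :=
    le_trans hsum1 (mul_le_mul_of_nonneg_right hm_bound hM0)
  have heq : (2 * (B * dist a b) / K + 1) * M = 2 * B * M / K * dist a b + M := by ring
  linarith

end AuxJump

theorem jump_of_mane_potential {X : Type*} [MetricSpace X] [Nonempty X] [ProperSpace X]
    {B K : ℝ} (hB : 1 ≤ B) (hK : 0 < K) (hlen : IsBLengthSpaceAtScale X B K)
    {c : X → X → ℝ} (hcont : Continuous fun q : X × X => c q.1 q.2)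
    (hsl : UniformlySuperlinear c) (hub : UniformlyBounded c) (x : X) :
    BddAbove {r : ℝ | ∃ u : X → ℝ, Dominated c (critValue c) u ∧
      r = Tm c u x + critValue c - u x} ∧
    sSup {r : ℝ | ∃ u : X → ℝ, Dominated c (critValue c) u ∧
      r = Tm c u x + critValue c - u x} = Tm c (mane c x) x + critValue c ∧
    ((𝓝[≠] x).NeBot →
      Tendsto (mane c x) (𝓝[≠] x)
        (𝓝 (sSup {r : ℝ | ∃ u : X → ℝ, Dominated c (critValue c) u ∧
          r = Tm c u x + critValue c - u x}))) := by
  obtain ⟨u₀, hu₀, hu₀x⟩ := exists_crit hsl x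
  have hφdom : Dominated c (critValue c) (mane c x) := mane_dom hsl x
  have hφx : mane c x x = 0 := mane_self hsl x
  have hbdd : BddAbove {r : ℝ | ∃ u : X → ℝ, Dominated c (critValue c) u ∧
      r = Tm c u x + critValue c - u x} := by
    refine ⟨c x x + critValue c, ?_⟩
    rintro r ⟨u, hu, rfl⟩
    have := Tm_le hu x x
    linarith
  have hmem : Tm c (mane c x) x + critValue c ∈ {r : ℝ | ∃ u : X → ℝ,
      Dominated c (critValue c) u ∧ r = Tm c u x + critValue c - u x} :=
    ⟨mane c x, hφdom, by rw [hφx]; ring⟩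
  have hsup : sSup {r : ℝ | ∃ u : X → ℝ, Dominated c (critValue c) u ∧
      r = Tm c u x + critValue c - u x} = Tm c (mane c x) x + critValue c := by
    apply le_antisymm
    · refine csSup_le ⟨_, hmem⟩ ?_
      rintro r ⟨u, hu, rfl⟩
      have hle : ∀ z, Tm c u x - u x ≤ mane c x z + c z x := by
        intro z
        have h1 := Tm_le hu x z
        have h2 := le_mane hu x z
        linarith
      have hle2 : Tm c u x - u x ≤ Tm c (mane c x) x := le_ciInf hle
      linarith
    · exact le_csSup hbdd hmem
  refine ⟨hbdd, hsup, ?_⟩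
  intro _
  rw [hsup]
  set L := Tm c (mane c x) x + critValue c with hL
  rw [Metric.tendsto_nhds]
  intro ε hε
  have hupper : ∀ᶠ y in 𝓝[≠] x, mane c x y < L + ε := by
    have hlt : Tm c (mane c x) x < Tm c (mane c x) x + ε / 2 := by linarith
    obtain ⟨z₀, hz₀⟩ := exists_lt_of_ciInf_lt hlt
    have hcz : Continuous fun y : X => c z₀ y := hcont.comp (Continuous.prodMk_right z₀)
    have hev : ∀ᶠ y in 𝓝 x, c z₀ y < c z₀ x + ε / 2 :=
      (hcz.tendsto x).eventually_lt_const (by linarith : c z₀ x < c z₀ x + ε / 2)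
    filter_upwards [eventually_nhdsWithin_of_eventually_nhds hev] with y hy
    have hdy : mane c x y - critValue c ≤ Tm c (mane c x) y := le_Tm hφdom y
    have h2 : Tm c (mane c x) y ≤ mane c x z₀ + c z₀ y := Tm_le hφdom y z₀
    linarith
  obtain ⟨A, hA⟩ := hub K
  set M : ℝ := max (A + critValue c) 0 with hM
  have hM0 : (0:ℝ) ≤ M := le_max_right _ _
  have hB0 : (0:ℝ) ≤ B := by linarith
  set lam : ℝ := 2 * B * M / K with hlam
  have hlam0 : 0 ≤ lam :=
    div_nonneg (mul_nonneg (mul_nonneg (by norm_num) hB0) hM0) hK.le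
  have hφlb : ∀ z : X, -(lam * dist z x + M) ≤ mane c x z := by
    intro z
    have h := coarse_lip hB hK hlen hA hφdom z x
    rw [hφx] at h
    simp only [← hM, ← hlam] at h
    linarith
  obtain ⟨C, hC⟩ := hsl (lam + 1) (by linarith)
  set R : ℝ := lam + M + C + |L - critValue c| + 1 with hR
  have hcpt : IsCompact ((closedBall x (R + 1)) ×ˢ (closedBall x 1)) :=
    (isCompact_closedBall x _).prod (isCompact_closedBall x _)
  have hucont := hcpt.uniformContinuousOn_of_continuous hcont.continuousOn
  rw [Metric.uniformContinuousOn_iff] at hucont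
  obtain ⟨δ, hδ0, hδ⟩ := hucont (ε/2) (by linarith)
  have hlower : ∀ᶠ y in 𝓝[≠] x, L - ε < mane c x y := by
    have hball : ∀ᶠ y in 𝓝[≠] x, dist y x < min δ 1 := by
      apply eventually_nhdsWithin_of_eventually_nhds
      filter_upwards [Metric.ball_mem_nhds x (lt_min hδ0 one_pos)] with y hy using hy
    filter_upwards [hball, self_mem_nhdsWithin] with y hy hyx
    have hyx' : y ≠ x := hyx
    have hy1 : dist y x < 1 := lt_of_lt_of_le hy (min_le_right _ _)
    have hyδ : dist y x < δ := lt_of_lt_of_le hy (min_le_left _ _)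
    have hkey : ∀ z : X, L - critValue c - ε/2 ≤ mane c x z + c z y := by
      intro z
      rcases le_or_gt (dist z y) R with hzy | hzy
      · -- near case
        have hzx : dist z x ≤ R + 1 := by
          have := dist_triangle z y x
          linarith
        have hz1 : (z, y) ∈ (closedBall x (R + 1)) ×ˢ (closedBall x 1) :=
          ⟨mem_closedBall.2 hzx, mem_closedBall.2 hy1.le⟩
        have hz2 : (z, x) ∈ (closedBall x (R + 1)) ×ˢ (closedBall x 1) :=
          ⟨mem_closedBall.2 hzx, mem_closedBall.2 (by simp)⟩
        have hdd : dist ((z, y) : X × X) (z, x) < δ := by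
          rw [Prod.dist_eq]
          simp only [dist_self]
          rw [max_eq_right dist_nonneg]
          exact hyδ
        have hcc := hδ _ hz1 _ hz2 hdd
        rw [Real.dist_eq] at hcc
        have hcc' : c z x - ε/2 < c z y := by
          have := abs_lt.1 hcc
          simp only at this
          linarith [this.2]
        have hTm : Tm c (mane c x) x ≤ mane c x z + c z x := Tm_le hφdom x z
        linarith [hL]
      · -- far case
        have h1 := hφlb z
        have h2 := hC z y
        have h3 : dist z x ≤ dist z y + dist y x := dist_triangle z y x
        have habs : L - critValue c ≤ |L - critValue c| := le_abs_self _
        nlinarith [hlam0, hy1, hzy, hR, hL]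
    have hTmy : L - critValue c - ε/2 ≤ Tm c (mane c x) y := le_ciInf hkey
    have heq := mane_eq_Tm hsl hyx'
    linarith
  filter_upwards [hupper, hlower] with y h1 h2
  rw [Real.dist_eq, abs_sub_lt_iff]
  constructor <;> linarith
end

section
/- For every integer n ≥ 1, the function c_n : X × X → ℝ defined by c_n(x,y) = inf over all chains x = x₀, x₁, …, xₙ = y in X of ∑_{i<n} c(xᵢ,xᵢ₊₁) is everywhere finite and continuous. -/
open Metric Set Filter Topology

theorem cChain_finite_and_continuous {X : Type*} [MetricSpace X] [Nonempty X] [ProperSpace X]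
    {B K : ℝ} (hB : 1 ≤ B) (hK : 0 < K) (hlen : IsBLengthSpaceAtScale X B K)
    {c : X → X → ℝ} (hcont : Continuous fun q : X × X => c q.1 q.2)
    (hsl : UniformlySuperlinear c) (hub : UniformlyBounded c) (n : ℕ) (hn : 1 ≤ n) :
    (∀ x y : X,
      {r : ℝ | ∃ p : ℕ → X, p 0 = x ∧ p n = y ∧
        r = ∑ i ∈ Finset.range n, c (p i) (p (i + 1))}.Nonempty ∧
      BddBelow {r : ℝ | ∃ p : ℕ → X, p 0 = x ∧ p n = y ∧
        r = ∑ i ∈ Finset.range n, c (p i) (p (i + 1))}) ∧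
    Continuous fun q : X × X => cChain c n q.1 q.2 := by
  obtain ⟨C0, hC0⟩ := hsl 0 le_rfl
  have hC0' : ∀ a b : X, -C0 ≤ c a b := fun a b => by simpa using hC0 a b
  have hn0 : (0 : ℕ) ≠ n := by omega
  have hne : ∀ x y : X, {r : ℝ | ∃ p : ℕ → X, p 0 = x ∧ p n = y ∧
      r = ∑ i ∈ Finset.range n, c (p i) (p (i + 1))}.Nonempty := by
    intro x y
    refine ⟨_, fun i => if i = n then y else x, ?_, ?_, rfl⟩
    · simp [hn0]
    · simp
  have hbdd : ∀ x y : X, BddBelow {r : ℝ | ∃ p : ℕ → X, p 0 = x ∧ p n = y ∧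
      r = ∑ i ∈ Finset.range n, c (p i) (p (i + 1))} := by
    intro x y
    refine ⟨(n : ℝ) * (-C0), ?_⟩
    rintro r ⟨p, -, -, rfl⟩
    calc (n : ℝ) * (-C0) = ∑ _i ∈ Finset.range n, (-C0) := by
          simp [Finset.sum_const, nsmul_eq_mul]
      _ ≤ _ := Finset.sum_le_sum fun i _ => hC0' _ _
  refine ⟨fun x y => ⟨hne x y, hbdd x y⟩, ?_⟩
  rw [Metric.continuous_iff]
  rintro ⟨x0, y0⟩ ε hε
  obtain ⟨C1, hC1⟩ := hsl 1 zero_le_one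
  obtain ⟨A, hA⟩ := hub (dist x0 y0 + 2)
  set R : ℝ := dist x0 y0 + 2 with hRdef
  have hR2 : (2 : ℝ) ≤ R := by
    have := dist_nonneg (x := x0) (y := y0); simp [hRdef]
  set M : ℝ := n * A with hMdef
  set η : ℝ := min (ε / (2 * (n + 1))) 1 with hηdef
  have hη0 : 0 < η := lt_min (by positivity) one_pos
  have hη1 : η ≤ 1 := min_le_right _ _
  set D : ℝ := max (M + 1 + ((n : ℝ) - 1) * C0 + C1) 0 with hDdef
  have hD0 : (0 : ℝ) ≤ D := le_max_right _ _
  set R' : ℝ := 2 + n * D with hR'def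
  set T := Metric.closedBall x0 R' with hTdef
  have hcompact : IsCompact (T ×ˢ T) :=
    (isCompact_closedBall _ _).prod (isCompact_closedBall _ _)
  have huc := hcompact.uniformContinuousOn_of_continuous hcont.continuousOn
  rw [Metric.uniformContinuousOn_iff_le] at huc
  obtain ⟨δ, hδ0, hδ⟩ := huc η hη0
  -- key estimate
  have key : ∀ x y x' y' : X, dist x x0 ≤ 1 → dist y y0 ≤ 1 →
      dist x' x ≤ min δ 1 → dist y' y ≤ min δ 1 →
      cChain c n x' y' ≤ cChain c n x y + ((n : ℝ) + 1) * η := by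
    intro x y x' y' hx hy hx' hy'
    -- upper bound on cChain c n x y
    have hxyR : dist x y ≤ R := by
      have h1 := dist_triangle x x0 y
      have h2 := dist_triangle x0 y0 y
      have h3 : dist y0 y = dist y y0 := dist_comm _ _
      simp only [hRdef]; linarith
    have hM : cChain c n x y ≤ M := by
      have hmem : (∑ i ∈ Finset.range n, c ((fun i => if i = n then y else x) i)
          ((fun i => if i = n then y else x) (i + 1))) ∈ {r : ℝ | ∃ p : ℕ → X, p 0 = x ∧
          p n = y ∧ r = ∑ i ∈ Finset.range n, c (p i) (p (i + 1))} := by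
        exact ⟨fun i => if i = n then y else x, by simp [hn0], by simp, rfl⟩
      have h1 : cChain c n x y ≤ ∑ i ∈ Finset.range n,
          c ((fun i => if i = n then y else x) i) ((fun i => if i = n then y else x) (i + 1)) :=
        csInf_le (hbdd x y) hmem
      have h2 : ∑ i ∈ Finset.range n, c ((fun i => if i = n then y else x) i)
          ((fun i => if i = n then y else x) (i + 1)) ≤ M := by
        have : ∀ i ∈ Finset.range n, c ((fun i => if i = n then y else x) i)
            ((fun i => if i = n then y else x) (i + 1)) ≤ A := by
          intro i hi
          simp only [Finset.mem_range] at hi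
          have hine : i ≠ n := by omega
          by_cases h : i + 1 = n
          · simp only [if_neg hine, if_pos h]
            exact hA _ _ hxyR
          · simp only [if_neg hine, if_neg h]
            exact hA _ _ (by simp; linarith)
        calc ∑ i ∈ Finset.range n, c ((fun i => if i = n then y else x) i)
              ((fun i => if i = n then y else x) (i + 1)) ≤ ∑ _i ∈ Finset.range n, A :=
              Finset.sum_le_sum this
          _ = M := by simp [hMdef, nsmul_eq_mul]
      linarith
    -- near-optimal chain
    have hlt : cChain c n x y < cChain c n x y + η := by linarith
    obtain ⟨r, hrmem, hrlt⟩ := exists_lt_of_csInf_lt (hne x y) hlt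
    obtain ⟨p, hp0, hpn, hr⟩ := hrmem
    -- each term of the chain is bounded above
    have hterm : ∀ j ∈ Finset.range n, c (p j) (p (j + 1)) ≤ M + 1 + ((n : ℝ) - 1) * C0 := by
      intro j hj
      have hsum := Finset.add_sum_erase (Finset.range n) (fun i => c (p i) (p (i + 1))) hj
      have hcard : ((Finset.range n).erase j).card = n - 1 := by
        rw [Finset.card_erase_of_mem hj, Finset.card_range]
      have hlow : ((n : ℝ) - 1) * (-C0) ≤ ∑ i ∈ (Finset.range n).erase j, c (p i) (p (i + 1)) := by
        calc ((n : ℝ) - 1) * (-C0) = ∑ _i ∈ (Finset.range n).erase j, (-C0) := by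
              rw [Finset.sum_const, hcard, nsmul_eq_mul, Nat.cast_sub hn]
              push_cast; ring
          _ ≤ _ := Finset.sum_le_sum fun i _ => hC0' _ _
      have hrM : r < M + 1 := by linarith
      have : c (p j) (p (j + 1)) + ∑ i ∈ (Finset.range n).erase j, c (p i) (p (i + 1)) = r := by
        rw [hsum, hr]
      nlinarith
    -- distance bound on each step
    have hstep : ∀ j ∈ Finset.range n, dist (p j) (p (j + 1)) ≤ D := by
      intro j hj
      have h1 := hC1 (p j) (p (j + 1))
      have h2 := hterm j hj
      have : dist (p j) (p (j + 1)) ≤ M + 1 + ((n : ℝ) - 1) * C0 + C1 := by linarith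
      exact this.trans (le_max_left _ _)
    -- chain points stay in a bounded region
    have hloc : ∀ i, i ≤ n → dist (p i) x0 ≤ 1 + i * D := by
      intro i
      induction i with
      | zero => intro _; simpa [hp0] using hx
      | succ i ih =>
        intro hi1
        have hi : i < n := by omega
        have h1 := ih (by omega)
        have h2 := hstep i (Finset.mem_range.mpr hi)
        have h3 := dist_triangle (p (i + 1)) (p i) x0
        have h4 : dist (p (i + 1)) (p i) = dist (p i) (p (i + 1)) := dist_comm _ _
        push_cast
        linarith
    have hpT : ∀ i, i ≤ n → p i ∈ T := by
      intro i hi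
      have h1 := hloc i hi
      have h2 : (i : ℝ) * D ≤ n * D := by
        apply mul_le_mul_of_nonneg_right _ hD0
        exact_mod_cast hi
      simp only [hTdef, Metric.mem_closedBall, hR'def]
      linarith
    -- the perturbed chain
    set p' : ℕ → X := fun i => if i = 0 then x' else if i = n then y' else p i with hp'def
    have hp'0 : p' 0 = x' := by simp [hp'def]
    have hp'n : p' n = y' := by simp [hp'def, Ne.symm hn0]
    have hclose : ∀ i, i ≤ n → dist (p' i) (p i) ≤ min δ 1 := by
      intro i hi
      by_cases h0 : i = 0
      · subst h0; rw [hp'0, hp0]; exact hx'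
      · by_cases hN : i = n
        · subst hN; rw [hp'n, hpn]; exact hy'
        · simp only [hp'def, if_neg h0, if_neg hN, dist_self]
          exact le_min (le_of_lt hδ0) zero_le_one
    have hp'T : ∀ i, i ≤ n → p' i ∈ T := by
      intro i hi
      have h1 := hclose i hi
      have h2 := hpT i hi
      have h3 := dist_triangle (p' i) (p i) x0
      simp only [hTdef, Metric.mem_closedBall] at h2 ⊢
      have h4 : min δ 1 ≤ 1 := min_le_right _ _
      have h5 : dist (p i) x0 ≤ 1 + (n : ℝ) * D := by
        have := hloc i hi
        have h6 : (i : ℝ) * D ≤ n * D := by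
          apply mul_le_mul_of_nonneg_right _ hD0
          exact_mod_cast hi
        linarith
      simp only [hR'def]
      linarith
    -- termwise comparison
    have htermwise : ∀ i ∈ Finset.range n, c (p' i) (p' (i + 1)) ≤ c (p i) (p (i + 1)) + η := by
      intro i hi
      simp only [Finset.mem_range] at hi
      have hu : ((p' i, p' (i + 1)) : X × X) ∈ T ×ˢ T :=
        Set.mem_prod.mpr ⟨hp'T i (by omega), hp'T (i + 1) (by omega)⟩
      have hv : ((p i, p (i + 1)) : X × X) ∈ T ×ˢ T :=
        Set.mem_prod.mpr ⟨hpT i (by omega), hpT (i + 1) (by omega)⟩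
      have hd : dist ((p' i, p' (i + 1)) : X × X) ((p i, p (i + 1)) : X × X) ≤ δ := by
        rw [Prod.dist_eq]
        have h1 := hclose i (by omega)
        have h2 := hclose (i + 1) (by omega)
        have h3 : min δ 1 ≤ δ := min_le_left _ _
        exact max_le (h1.trans h3) (h2.trans h3)
      have := hδ _ hu _ hv hd
      rw [Real.dist_eq, abs_le] at this
      simp only at this
      linarith [this.1]
    -- conclude
    have hmem' : (∑ i ∈ Finset.range n, c (p' i) (p' (i + 1))) ∈ {r : ℝ | ∃ p : ℕ → X,
        p 0 = x' ∧ p n = y' ∧ r = ∑ i ∈ Finset.range n, c (p i) (p (i + 1))} :=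
      ⟨p', hp'0, hp'n, rfl⟩
    have h1 : cChain c n x' y' ≤ ∑ i ∈ Finset.range n, c (p' i) (p' (i + 1)) :=
      csInf_le (hbdd x' y') hmem'
    have h2 : ∑ i ∈ Finset.range n, c (p' i) (p' (i + 1)) ≤
        (∑ i ∈ Finset.range n, c (p i) (p (i + 1))) + n * η := by
      calc ∑ i ∈ Finset.range n, c (p' i) (p' (i + 1))
          ≤ ∑ i ∈ Finset.range n, (c (p i) (p (i + 1)) + η) := Finset.sum_le_sum htermwise
        _ = (∑ i ∈ Finset.range n, c (p i) (p (i + 1))) + n * η := by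
            rw [Finset.sum_add_distrib, Finset.sum_const, Finset.card_range, nsmul_eq_mul]
    have h3 : (∑ i ∈ Finset.range n, c (p i) (p (i + 1))) < cChain c n x y + η := by
      rw [← hr]; exact hrlt
    nlinarith [hη0.le]
  -- finish: continuity at (x0, y0)
  refine ⟨min δ 1, lt_min hδ0 one_pos, ?_⟩
  rintro ⟨x, y⟩ hdist
  rw [Prod.dist_eq] at hdist
  have hxx0 : dist x x0 ≤ min δ 1 := le_of_lt (lt_of_le_of_lt (le_max_left _ _) hdist)
  have hyy0 : dist y y0 ≤ min δ 1 := le_of_lt (lt_of_le_of_lt (le_max_right _ _) hdist)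
  have hx1 : dist x x0 ≤ 1 := hxx0.trans (min_le_right _ _)
  have hy1 : dist y y0 ≤ 1 := hyy0.trans (min_le_right _ _)
  have k1 : cChain c n x y ≤ cChain c n x0 y0 + ((n : ℝ) + 1) * η :=
    key x0 y0 x y (by simp) (by simp) hxx0 hyy0
  have k2 : cChain c n x0 y0 ≤ cChain c n x y + ((n : ℝ) + 1) * η :=
    key x y x0 y0 hx1 hy1 (by rwa [dist_comm]) (by rwa [dist_comm])
  have hηε : ((n : ℝ) + 1) * η ≤ ε / 2 := by
    have h1 : η ≤ ε / (2 * (n + 1)) := min_le_left _ _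
    have h2 : (0 : ℝ) < (n : ℝ) + 1 := by positivity
    calc ((n : ℝ) + 1) * η ≤ ((n : ℝ) + 1) * (ε / (2 * (n + 1))) :=
          mul_le_mul_of_nonneg_left h1 h2.le
      _ = ε / 2 := by field_simp
  simp only [Real.dist_eq]
  rw [abs_lt]
  constructor <;> linarith
end

section
/- For every integer n ≥ 1: the function φ_n is upper semi-continuous on X × X; for every x ∈ X the function φ_{n,x} = φ_n(x,·) is a critical sub-solution; and T⁻φ_{n,x} + α[0] = φ_{n+1,x}. -/
open Metric Set Filter Topology

set_option linter.unusedSectionVars false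

section crit
variable {X : Type*} [MetricSpace X] [Nonempty X] {c : X → X → ℝ}

variable {X : Type*} [MetricSpace X] [Nonempty X] {c : X → X → ℝ}

lemma exists_cost_lb (hsl : UniformlySuperlinear c) : ∃ C : ℝ, ∀ x y : X, -C ≤ c x y := by
  obtain ⟨C, hC⟩ := hsl 0 le_rfl
  exact ⟨C, fun x y => by have := hC x y; linarith⟩

lemma dominated_mono {a b : ℝ} {u : X → ℝ} (hab : a ≤ b) (h : Dominated c a u) :
    Dominated c b u := fun x y => (h x y).trans (by linarith)

lemma critSet_nonempty (hsl : UniformlySuperlinear c) :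
    {α : ℝ | ∃ u : X → ℝ, Dominated c α u}.Nonempty := by
  obtain ⟨C, hC⟩ := exists_cost_lb hsl
  exact ⟨C, fun _ => 0, fun x y => by have := hC x y; simp; linarith⟩

lemma critSet_bddBelow : BddBelow {α : ℝ | ∃ u : X → ℝ, Dominated c α u} := by
  obtain ⟨x₀⟩ := ‹Nonempty X›
  refine ⟨-c x₀ x₀, fun α ⟨u, hu⟩ => ?_⟩
  have := hu x₀ x₀; linarith

lemma exists_critical_subsolution (hsl : UniformlySuperlinear c) :
    ∃ u : X → ℝ, Dominated c (critValue c) u := by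
  classical
  obtain ⟨x₀⟩ := ‹Nonempty X›
  set α₀ := critValue c with hα₀
  -- choose a sequence of almost-critical subsolutions, normalized at x₀
  have hch : ∀ m : ℕ, ∃ u : X → ℝ, Dominated c (α₀ + 1 / (m + 1)) u ∧ u x₀ = 0 := by
    intro m
    have hpos : (0:ℝ) < 1 / (m + 1) := by positivity
    have hlt : sInf {α : ℝ | ∃ u : X → ℝ, Dominated c α u} < α₀ + 1 / (m + 1) := by
      have : sInf {α : ℝ | ∃ u : X → ℝ, Dominated c α u} = α₀ := hα₀.symm
      rw [this]; linarith
    obtain ⟨a, ⟨u, hu⟩, halt⟩ := exists_lt_of_csInf_lt (critSet_nonempty hsl) hlt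
    refine ⟨fun y => u y - u x₀, fun x y => ?_, by simp⟩
    have := hu x y; simp only []; linarith
  choose v hv hv0 using hch
  have hone : ∀ m : ℕ, (1:ℝ) / (m + 1) ≤ 1 := by
    intro m
    rw [div_le_one (by positivity)]
    have : (0:ℝ) ≤ (m:ℝ) := Nat.cast_nonneg m
    linarith
  have hub : ∀ (y : X) (m : ℕ), v m y ≤ c x₀ y + α₀ + 1 := by
    intro y m
    have h := hv m x₀ y
    have := hone m
    rw [hv0 m] at h; linarith
  have hlb : ∀ (y : X) (m : ℕ), -(c y x₀) - α₀ - 1 ≤ v m y := by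
    intro y m
    have h := hv m y x₀
    have := hone m
    rw [hv0 m] at h; linarith
  refine ⟨fun y => Filter.liminf (fun m => v m y) Filter.atTop, fun x y => ?_⟩
  have hbdd_above : ∀ z : X, Filter.IsBoundedUnder (· ≤ ·) Filter.atTop (fun m => v m z) :=
    fun z => Filter.isBoundedUnder_of ⟨c x₀ z + α₀ + 1, hub z⟩
  have hbdd_below : ∀ z : X, Filter.IsBoundedUnder (· ≥ ·) Filter.atTop (fun m => v m z) :=
    fun z => Filter.isBoundedUnder_of ⟨-(c z x₀) - α₀ - 1, hlb z⟩
  rw [sub_le_iff_le_add]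
  refine le_of_forall_pos_le_add fun ε hε => ?_
  have hev : ∀ᶠ m : ℕ in Filter.atTop, v m y ≤ v m x + (c x y + α₀ + ε) := by
    have ht : Filter.Tendsto (fun m : ℕ => (1:ℝ) / (m + 1)) Filter.atTop (𝓝 0) :=
      tendsto_one_div_add_atTop_nhds_zero_nat
    filter_upwards [ht.eventually (gt_mem_nhds hε)] with m hm
    have := hv m x y; linarith
  have h1 : Filter.liminf (fun m => v m y) Filter.atTop ≤
      Filter.liminf (fun m => v m x + (c x y + α₀ + ε)) Filter.atTop := by
    refine Filter.liminf_le_liminf hev (hbdd_below y)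
      ((Filter.isBoundedUnder_of ⟨c x₀ x + α₀ + 1 + (c x y + α₀ + ε),
        fun m => by have := hub x m; linarith⟩).isCoboundedUnder_ge)
  have h2 : Filter.liminf (fun m => v m x + (c x y + α₀ + ε)) Filter.atTop =
      Filter.liminf (fun m => v m x) Filter.atTop + (c x y + α₀ + ε) :=
    liminf_add_const Filter.atTop (fun m => v m x) _
      ((hbdd_above x).isCoboundedUnder_ge) (hbdd_below x)
  rw [h2] at h1
  linarith

end crit

section chains

variable {X : Type*} {c : X → X → ℝ} {α : ℝ} {u : X → ℝ}

/-- the defining set of `cChain`. -/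
def SC (c : X → X → ℝ) (k : ℕ) (x y : X) : Set ℝ :=
  {r : ℝ | ∃ p : ℕ → X, p 0 = x ∧ p k = y ∧
    r = ∑ i ∈ Finset.range k, c (p i) (p (i + 1))}

lemma cChain_eq (k : ℕ) (x y : X) : cChain c k x y = sInf (SC c k x y) := rfl

/-- the defining set of `phiN`. -/
def TS (c : X → X → ℝ) (α : ℝ) (n : ℕ) (x y : X) : Set ℝ :=
  {r : ℝ | ∃ k : ℕ, n ≤ k ∧ r = cChain c k x y + k * α}

lemma phiN_eq (n : ℕ) (x y : X) : phiN c α n x y = sInf (TS c α n x y) := rfl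

lemma SC_nonempty {k : ℕ} (hk : 1 ≤ k) (x y : X) : (SC c k x y).Nonempty := by
  refine ⟨_, fun i => if i = 0 then x else y, by simp, by simp [Nat.one_le_iff_ne_zero.mp hk], rfl⟩

lemma chain_elt_lb (hu : Dominated c α u) {k : ℕ} {x y : X} {r : ℝ} (hr : r ∈ SC c k x y) :
    u y - u x - k * α ≤ r := by
  obtain ⟨p, h0, hk, rfl⟩ := hr
  have h1 : ∀ i ∈ Finset.range k, u (p (i + 1)) - u (p i) - α ≤ c (p i) (p (i + 1)) :=
    fun i _ => by have := hu (p i) (p (i + 1)); linarith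
  have h2 := Finset.sum_le_sum h1
  have h3 : ∑ i ∈ Finset.range k, (u (p (i + 1)) - u (p i) - α)
      = (u (p k) - u (p 0)) - k * α := by
    rw [Finset.sum_sub_distrib, Finset.sum_range_sub (fun i => u (p i)) k]
    simp [mul_comm]
  rw [h3, h0, hk] at h2
  linarith

lemma SC_bddBelow (hu : Dominated c α u) (k : ℕ) (x y : X) : BddBelow (SC c k x y) :=
  ⟨u y - u x - k * α, fun _ hr => chain_elt_lb hu hr⟩

lemma le_cChain (hu : Dominated c α u) {k : ℕ} (hk : 1 ≤ k) (x y : X) :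
    u y - u x - k * α ≤ cChain c k x y :=
  le_csInf (SC_nonempty hk x y) fun _ hr => chain_elt_lb hu hr

lemma TS_nonempty (n : ℕ) (x y : X) : (TS c α n x y).Nonempty := ⟨_, n, le_rfl, rfl⟩

lemma phiN_elt_lb (hu : Dominated c α u) {n : ℕ} (hn : 1 ≤ n) {x y : X} {r : ℝ}
    (hr : r ∈ TS c α n x y) : u y - u x ≤ r := by
  obtain ⟨k, hk, rfl⟩ := hr
  have := le_cChain hu (hn.trans hk) x y
  linarith

lemma TS_bddBelow (hu : Dominated c α u) {n : ℕ} (hn : 1 ≤ n) (x y : X) :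
    BddBelow (TS c α n x y) :=
  ⟨u y - u x, fun _ hr => phiN_elt_lb hu hn hr⟩

lemma le_phiN (hu : Dominated c α u) {n : ℕ} (hn : 1 ≤ n) (x y : X) :
    u y - u x ≤ phiN c α n x y :=
  le_csInf (TS_nonempty n x y) fun _ hr => phiN_elt_lb hu hn hr

lemma phiN_le_cChain (hu : Dominated c α u) {n k : ℕ} (hn : 1 ≤ n) (hk : n ≤ k) (x y : X) :
    phiN c α n x y ≤ cChain c k x y + k * α :=
  csInf_le (TS_bddBelow hu hn x y) ⟨k, hk, rfl⟩

/-- Appending one step to a chain. -/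
lemma cChain_append (hu : Dominated c α u) {k : ℕ} (hk : 1 ≤ k) (x y z : X) :
    cChain c (k + 1) x z ≤ cChain c k x y + c y z := by
  rw [cChain_eq k x y]
  rw [show sInf (SC c k x y) + c y z = sInf (SC c k x y) - (- c y z) by ring]
  rw [le_sub_iff_add_le]
  refine le_csInf (SC_nonempty hk x y) fun r hr => ?_
  obtain ⟨p, h0, hpk, rfl⟩ := hr
  rw [add_neg_le_iff_le_add]
  refine csInf_le (SC_bddBelow hu (k + 1) x z) ?_
  refine ⟨fun i => if i ≤ k then p i else z, by simp [h0], by simp, ?_⟩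
  rw [Finset.sum_range_succ]
  congr 1
  · refine Finset.sum_congr rfl fun i hi => ?_
    have hik : i < k := Finset.mem_range.mp hi
    simp [hik.le, Nat.succ_le_of_lt hik]
  · simp [hpk]

/-- Peeling the last step off a chain. -/
lemma cChain_peel (hu : Dominated c α u) {k : ℕ} {x z : X} {r : ℝ}
    (hr : r ∈ SC c (k + 1) x z) : ∃ y : X, cChain c k x y + c y z ≤ r := by
  obtain ⟨p, h0, hpk, rfl⟩ := hr
  refine ⟨p k, ?_⟩
  rw [Finset.sum_range_succ, hpk]
  have : cChain c k x (p k) ≤ ∑ i ∈ Finset.range k, c (p i) (p (i + 1)) :=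
    csInf_le (SC_bddBelow hu k x (p k)) ⟨p, h0, rfl, rfl⟩
  linarith

end chains

theorem phiN_properties {X : Type*} [MetricSpace X] [Nonempty X] [ProperSpace X]
    {B K : ℝ} (hB : 1 ≤ B) (hK : 0 < K) (hlen : IsBLengthSpaceAtScale X B K)
    {c : X → X → ℝ} (hcont : Continuous fun q : X × X => c q.1 q.2)
    (hsl : UniformlySuperlinear c) (hub : UniformlyBounded c) (n : ℕ) (hn : 1 ≤ n) :
    UpperSemicontinuous (fun q : X × X => phiN c (critValue c) n q.1 q.2) ∧
    (∀ x : X, Dominated c (critValue c) (phiN c (critValue c) n x)) ∧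
    (∀ x y : X, Tm c (phiN c (critValue c) n x) y + critValue c =
      phiN c (critValue c) (n + 1) x y) := by
  classical
  obtain ⟨u₀, hu₀⟩ := exists_critical_subsolution hsl
  set α₀ := critValue c with hα₀def
  have hn1 : 1 ≤ n + 1 := by omega
  refine ⟨?_, ?_, ?_⟩
  · -- upper semicontinuity
    intro q t ht
    have ht' : sInf (TS c α₀ n q.1 q.2) < t := ht
    obtain ⟨r, ⟨k, hk, rfl⟩, hrt⟩ := exists_lt_of_csInf_lt (TS_nonempty n q.1 q.2) ht'
    have hk1 : 1 ≤ k := hn.trans hk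
    have h2 : cChain c k q.1 q.2 < t - k * α₀ := by linarith
    rw [cChain_eq] at h2
    obtain ⟨s, ⟨p, h0, hpk, rfl⟩, hst⟩ := exists_lt_of_csInf_lt (SC_nonempty hk1 q.1 q.2) h2
    set pp : X × X → ℕ → X :=
      fun q' i => if i = 0 then q'.1 else if i = k then q'.2 else p i with hpp
    have hppc : ∀ j : ℕ, Continuous fun q' : X × X => pp q' j := by
      intro j
      rcases eq_or_ne j 0 with rfl | hj0
      · simpa [hpp] using continuous_fst
      · rcases eq_or_ne j k with rfl | hjk
        · simpa [hpp, hj0] using continuous_snd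
        · simpa [hpp, hj0, hjk] using continuous_const
    have hgcont : Continuous fun q' : X × X =>
        ∑ i ∈ Finset.range k, c (pp q' i) (pp q' (i + 1)) := by
      refine continuous_finset_sum _ fun i _ => ?_
      exact hcont.comp ((hppc i).prodMk (hppc (i + 1)))
    have e : ∀ j ≤ k, pp q j = p j := by
      intro j hj
      rcases eq_or_ne j 0 with rfl | hj0
      · simp [hpp, h0]
      · rcases eq_or_ne j k with rfl | hjk
        · simp [hpp, hj0, hpk]
        · simp [hpp, hj0, hjk]
    have hgq : ∑ i ∈ Finset.range k, c (pp q i) (pp q (i + 1))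
        = ∑ i ∈ Finset.range k, c (p i) (p (i + 1)) := by
      refine Finset.sum_congr rfl fun i hi => ?_
      have hik : i < k := Finset.mem_range.mp hi
      rw [e i hik.le, e (i + 1) (Nat.succ_le_of_lt hik)]
    have hopen : IsOpen {q' : X × X |
        (∑ i ∈ Finset.range k, c (pp q' i) (pp q' (i + 1))) < t - k * α₀} :=
      isOpen_lt hgcont continuous_const
    have hmem : q ∈ {q' : X × X |
        (∑ i ∈ Finset.range k, c (pp q' i) (pp q' (i + 1))) < t - k * α₀} := by
      simpa [hgq] using hst
    filter_upwards [hopen.mem_nhds hmem] with q' hq'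
    have h5 : cChain c k q'.1 q'.2 ≤
        ∑ i ∈ Finset.range k, c (pp q' i) (pp q' (i + 1)) := by
      refine csInf_le (SC_bddBelow hu₀ k q'.1 q'.2) ?_
      exact ⟨pp q', by simp [hpp], by simp [hpp, Nat.one_le_iff_ne_zero.mp hk1], rfl⟩
    have h6 : phiN c α₀ n q'.1 q'.2 ≤ cChain c k q'.1 q'.2 + k * α₀ :=
      phiN_le_cChain hu₀ hn hk q'.1 q'.2
    have hq'' : (∑ i ∈ Finset.range k, c (pp q' i) (pp q' (i + 1))) < t - k * α₀ := hq'
    show phiN c α₀ n q'.1 q'.2 < t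
    linarith
  · -- domination
    intro x y z
    have h1 : phiN c α₀ n x z - (c y z + α₀) ≤ phiN c α₀ n x y := by
      rw [phiN_eq n x y]
      refine le_csInf (TS_nonempty n x y) fun r hr => ?_
      obtain ⟨k, hk, rfl⟩ := hr
      have h2 : phiN c α₀ n x z ≤ cChain c (k + 1) x z + (k + 1 : ℕ) * α₀ :=
        phiN_le_cChain hu₀ hn (hk.trans (Nat.le_succ k)) x z
      have h3 := cChain_append hu₀ (hn.trans hk) x y z
      push_cast at h2 ⊢
      linarith
    linarith
  · -- Lax-Oleinik step
    intro x z
    have hbdd : BddBelow (Set.range fun y => phiN c α₀ n x y + c y z) := by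
      refine ⟨u₀ z - u₀ x - α₀, fun r hr => ?_⟩
      obtain ⟨y, rfl⟩ := hr
      have h1 := le_phiN hu₀ hn x y
      have h2 := hu₀ y z
      simp only []
      linarith
    refine le_antisymm ?_ ?_
    · rw [phiN_eq]
      refine le_csInf (TS_nonempty (n + 1) x z) fun r hr => ?_
      obtain ⟨k, hk, rfl⟩ := hr
      obtain ⟨m, rfl⟩ : ∃ m, k = m + 1 := ⟨k - 1, by omega⟩
      have hm : n ≤ m := by omega
      have key : Tm c (phiN c α₀ n x) z - m * α₀ ≤ cChain c (m + 1) x z := by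
        rw [cChain_eq]
        refine le_csInf (SC_nonempty (by omega) x z) fun s hs => ?_
        obtain ⟨y, hy⟩ := cChain_peel hu₀ hs
        have h1 : Tm c (phiN c α₀ n x) z ≤ phiN c α₀ n x y + c y z := ciInf_le hbdd y
        have h2 := phiN_le_cChain hu₀ hn hm x y
        linarith
      push_cast
      linarith
    · have h1 : phiN c α₀ (n + 1) x z - α₀ ≤ Tm c (phiN c α₀ n x) z := by
        refine le_ciInf fun y => ?_
        have h2 : phiN c α₀ (n + 1) x z - α₀ - c y z ≤ phiN c α₀ n x y := by
          rw [phiN_eq n x y]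
          refine le_csInf (TS_nonempty n x y) fun r hr => ?_
          obtain ⟨k, hk, rfl⟩ := hr
          have h3 : phiN c α₀ (n + 1) x z ≤ cChain c (k + 1) x z + (k + 1 : ℕ) * α₀ :=
            phiN_le_cChain hu₀ hn1 (by omega) x z
          have h4 := cChain_append hu₀ (hn.trans hk) x y z
          push_cast at h3 ⊢
          linarith
        linarith
      linarith
end
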